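/- arXiv:1201.2693 — 6 statements merged into one kernel-verified Lean document; each statement's English description precedes it below -/
import Mathlib

section
/- Let X = (X_n)_{n≥1} be a weak solution of the dyadic model system X_n' = k_{n-1} X_{n-1}^2 - k_n X_n X_{n+1} (with X_0 ≡ 0, k_0 = 0, k_n = 2^{βn}). If X_n(t_0) > 0 for some t_0 ≥ 0, then X_n(t) > 0 for all t ≥ t_0; similarly if X_n(t_0) ≥ 0, then X_n(t) ≥ 0 for all t ≥ t_0. -/
/-- Positivity is maintained: for a weak solution of the inviscid dyadic model,
if `X n t₀ > 0` then `X n t > 0` for all `t ≥ t₀`, and similarly with `≥ 0`. -/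
theorem dyadic_positivity_maintained
    (β : ℝ) (hβ : 0 < β) (k : ℕ → ℝ)
    (hk0 : k 0 = 0) (hk : ∀ n : ℕ, 1 ≤ n → k n = (2:ℝ) ^ (β * (n:ℝ)))
    (X : ℕ → ℝ → ℝ) (hX0 : ∀ t : ℝ, X 0 t = 0)
    (hsol : ∀ n : ℕ, 1 ≤ n → ∀ t : ℝ, 0 ≤ t →
      HasDerivAt (X n)
        (k (n-1) * (X (n-1) t) ^ 2 - k n * X n t * X (n+1) t) t)
    (n : ℕ) (hn : 1 ≤ n) (t₀ : ℝ) (ht₀ : 0 ≤ t₀) :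
    (0 < X n t₀ → ∀ t : ℝ, t₀ ≤ t → 0 < X n t) ∧
    (0 ≤ X n t₀ → ∀ t : ℝ, t₀ ≤ t → 0 ≤ X n t) := by
  -- continuity of X (n+1) at nonneg points
  have hXc : ∀ s : ℝ, 0 ≤ s → ContinuousAt (X (n+1)) s := fun s hs =>
    (hsol (n+1) (by omega) s hs).continuousAt
  -- continuous integrand
  set c : ℝ → ℝ := fun s => k n * X (n+1) (max s 0) with hc_def
  have hc : Continuous c := by
    apply continuous_const.mul
    rw [continuous_iff_continuousAt]
    intro s
    have h1 : ContinuousAt (fun x : ℝ => max x 0) s :=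
      (continuous_id.max continuous_const).continuousAt
    show ContinuousAt (X (n+1) ∘ fun x : ℝ => max x 0) s
    exact ContinuousAt.comp (x := s) (hXc (max s 0) (le_max_right _ _)) h1
  set F : ℝ → ℝ := fun t => ∫ s in t₀..t, c s with hF_def
  have hF : ∀ t : ℝ, HasDerivAt F (c t) t := fun t =>
    intervalIntegral.integral_hasDerivAt_right (hc.intervalIntegrable _ _)
      (hc.stronglyMeasurableAtFilter _ _) hc.continuousAt
  set g : ℝ → ℝ := fun t => X n t * Real.exp (F t) with hg_def
  have hkn1 : 0 ≤ k (n-1) := by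
    rcases Nat.eq_or_lt_of_le hn with h | h
    · simp [← h, hk0]
    · rw [hk (n-1) (by omega)]; positivity
  have hg : ∀ t : ℝ, 0 ≤ t → HasDerivAt g
      (Real.exp (F t) * (k (n-1) * (X (n-1) t) ^ 2)) t := by
    intro t ht
    have h1 := (hsol n hn t ht).mul ((hF t).exp)
    have hct : c t = k n * X (n+1) t := by simp [hc_def, max_eq_left ht]
    refine h1.congr_deriv ?_
    rw [hct]; ring
  have hmono : MonotoneOn g (Set.Ici t₀) := by
    apply monotoneOn_of_deriv_nonneg (convex_Ici t₀)
    · intro t ht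
      exact (hg t (le_trans ht₀ ht)).continuousAt.continuousWithinAt
    · intro t ht
      rw [interior_Ici] at ht
      exact (hg t (le_trans ht₀ (le_of_lt ht))).differentiableAt.differentiableWithinAt
    · intro t ht
      rw [interior_Ici] at ht
      rw [(hg t (le_trans ht₀ (le_of_lt ht))).deriv]
      positivity
  have hg0 : g t₀ = X n t₀ := by
    simp [hg_def, hF_def, intervalIntegral.integral_same]
  have key : ∀ t : ℝ, t₀ ≤ t → X n t₀ ≤ X n t * Real.exp (F t) := by
    intro t ht
    have := hmono (Set.self_mem_Ici) (Set.mem_Ici.mpr ht) ht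
    rwa [hg0] at this
  constructor
  · intro h0 t ht
    have := lt_of_lt_of_le h0 (key t ht)
    have he : 0 < Real.exp (F t) := Real.exp_pos _
    nlinarith
  · intro h0 t ht
    have := le_trans h0 (key t ht)
    have he : 0 < Real.exp (F t) := Real.exp_pos _
    nlinarith
end

section
/- If the initial condition x of the dyadic model has infinitely many non-negative components (i.e., there is an increasing sequence (n_i) with x_{n_i} ≥ 0), then every finite energy weak solution X with X(0) = x is Leray-Hopf: the ℓ² norm t ↦ ‖X(t)‖_{ℓ²} is non-increasing in t. -/
/-- If the initial condition has infinitely many non-negative components, then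
every finite energy weak solution is Leray–Hopf: `t ↦ ‖X t‖_{ℓ²}` is non-increasing. -/
theorem dyadic_infinitely_many_nonneg_implies_LerayHopf
    (β : ℝ) (hβ : 0 < β) (k : ℕ → ℝ)
    (hk0 : k 0 = 0) (hk : ∀ n : ℕ, 1 ≤ n → k n = (2:ℝ) ^ (β * (n:ℝ)))
    (x : ℕ → ℝ) (hx0 : x 0 = 0)
    (X : ℕ → ℝ → ℝ) (hX0 : ∀ t : ℝ, X 0 t = 0)
    (hinit : ∀ n : ℕ, X n 0 = x n)
    (hsol : ∀ n : ℕ, 1 ≤ n → ∀ t : ℝ, 0 ≤ t →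
      HasDerivAt (X n)
        (k (n-1) * (X (n-1) t) ^ 2 - k n * X n t * X (n+1) t) t)
    (hfin : ∀ t : ℝ, 0 ≤ t → Summable (fun n : ℕ => (X n t) ^ 2))
    (hinfnonneg : ∀ m : ℕ, ∃ n : ℕ, m ≤ n ∧ 1 ≤ n ∧ 0 ≤ x n) :
    ∀ s t : ℝ, 0 ≤ s → s ≤ t →
      (∑' n : ℕ, (X n t) ^ 2) ≤ ∑' n : ℕ, (X n s) ^ 2 := by
  -- k is nonnegative
  have hknn : ∀ n : ℕ, 0 ≤ k n := by
    intro n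
    rcases Nat.eq_zero_or_pos n with h | h
    · simp [h, hk0]
    · rw [hk n h]; positivity
  -- continuity of each component at nonnegative times
  have hcont : ∀ m : ℕ, 1 ≤ m → ∀ t : ℝ, 0 ≤ t → ContinuousAt (X m) t := fun m hm t ht =>
    (hsol m hm t ht).continuousAt
  -- components with nonnegative initial data stay nonnegative
  have hnonneg : ∀ n : ℕ, 1 ≤ n → 0 ≤ x n → ∀ t : ℝ, 0 ≤ t → 0 ≤ X n t := by
    intro n hn hxn t ht
    set f : ℝ → ℝ := fun u => k n * X (n+1) (max u 0) with hf
    have hfc : Continuous f := by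
      rw [continuous_iff_continuousAt]
      intro u
      have h1 : ContinuousAt (fun u : ℝ => max u 0) u :=
        (continuous_id.max continuous_const).continuousAt
      have h2 : ContinuousAt ((X (n+1)) ∘ (fun u : ℝ => max u 0)) u :=
        ContinuousAt.comp (hcont (n+1) (by omega) (max u 0) (le_max_right _ _)) h1
      exact continuousAt_const.mul h2
    set g : ℝ → ℝ := fun u => ∫ v in (0:ℝ)..u, f v with hg
    have hgd : ∀ u : ℝ, HasDerivAt g (f u) u := by
      intro u
      exact intervalIntegral.integral_hasDerivAt_right
        (hfc.intervalIntegrable _ _)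
        hfc.aestronglyMeasurable.stronglyMeasurableAtFilter hfc.continuousAt
    set Y : ℝ → ℝ := fun u => X n u * Real.exp (g u) with hY
    have hYd : ∀ u : ℝ, 0 ≤ u → HasDerivAt Y
        (k (n-1) * X (n-1) u ^ 2 * Real.exp (g u)) u := by
      intro u hu
      have h1 := (hsol n hn u hu).mul ((hgd u).exp)
      have h2 : (k (n-1) * X (n-1) u ^ 2 - k n * X n u * X (n+1) u) * Real.exp (g u)
          + X n u * (Real.exp (g u) * f u) = k (n-1) * X (n-1) u ^ 2 * Real.exp (g u) := by
        simp only [hf, max_eq_left hu]; ring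
      rwa [h2] at h1
    have hmono : MonotoneOn Y (Set.Ici (0:ℝ)) := by
      apply monotoneOn_of_deriv_nonneg (convex_Ici 0)
      · intro u hu
        exact (hYd u hu).continuousAt.continuousWithinAt
      · intro u hu
        rw [interior_Ici] at hu
        exact (hYd u hu.le).differentiableAt.differentiableWithinAt
      · intro u hu
        rw [interior_Ici] at hu
        rw [(hYd u hu.le).deriv]
        exact mul_nonneg (mul_nonneg (hknn _) (sq_nonneg _)) (Real.exp_pos _).le
    have h0 : Y 0 = x n := by
      simp [hY, hg, hinit n]
    have hYt : 0 ≤ Y t := by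
      have := hmono Set.self_mem_Ici ht ht
      rw [h0] at this
      exact hxn.trans this
    exact (mul_nonneg_iff_of_pos_right (Real.exp_pos (g t))).mp hYt
  -- derivative of the partial energy
  have hEd : ∀ N : ℕ, ∀ t : ℝ, 0 ≤ t →
      HasDerivAt (fun u => ∑ i ∈ Finset.range (N+1), X i u ^ 2)
        (-(2 * k N * X N t ^ 2 * X (N+1) t)) t := by
    intro N t ht
    induction N with
    | zero =>
      have h1 : (fun u => ∑ i ∈ Finset.range 1, X i u ^ 2) = fun _ => (0:ℝ) := by
        funext u; simp [hX0]
      have h2 : -(2 * k 0 * X 0 t ^ 2 * X 1 t) = 0 := by rw [hk0]; ring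
      rw [h1, h2]
      exact hasDerivAt_const t 0
    | succ N ih =>
      have hs1 : (fun u => ∑ i ∈ Finset.range (N+2), X i u ^ 2)
          = fun u => (∑ i ∈ Finset.range (N+1), X i u ^ 2) + X (N+1) u ^ 2 := by
        funext u; rw [Finset.sum_range_succ]
      have hd := (hsol (N+1) (by omega) t ht).pow 2
      have h1 := ih.add hd
      rw [hs1]
      convert h1 using 1
      · rfl
      · rfl
      · rfl
      have he : N + 1 - 1 = N := rfl
      rw [he]
      push_cast
      ring
  -- the partial energy up to n-1 is nonincreasing when x n ≥ 0
  have hanti : ∀ n : ℕ, 1 ≤ n → 0 ≤ x n →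
      AntitoneOn (fun u => ∑ i ∈ Finset.range n, X i u ^ 2) (Set.Ici (0:ℝ)) := by
    intro n hn hxn
    obtain ⟨N, rfl⟩ : ∃ N, n = N + 1 := ⟨n - 1, by omega⟩
    apply antitoneOn_of_deriv_nonpos (convex_Ici 0)
    · intro u hu
      exact (hEd N u hu).continuousAt.continuousWithinAt
    · intro u hu
      rw [interior_Ici] at hu
      exact (hEd N u hu.le).differentiableAt.differentiableWithinAt
    · intro u hu
      rw [interior_Ici] at hu
      rw [(hEd N u hu.le).deriv]
      have : 0 ≤ 2 * k N * X N u ^ 2 * X (N+1) u :=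
        mul_nonneg (mul_nonneg (mul_nonneg (by norm_num) (hknn _)) (sq_nonneg _))
          (hnonneg (N+1) hn hxn u hu.le)
      linarith
  -- conclusion
  intro s t hs hst
  have ht : 0 ≤ t := hs.trans hst
  refine Summable.tsum_le_of_sum_le (hfin t ht) ?_
  intro F
  obtain ⟨n, hmn, hn1, hxn⟩ := hinfnonneg (F.sup id + 1)
  have hFsub : F ⊆ Finset.range n := by
    intro i hi
    have : i ≤ F.sup id := Finset.le_sup (f := id) hi
    simp only [Finset.mem_range]
    omega
  calc ∑ i ∈ F, X i t ^ 2
      ≤ ∑ i ∈ Finset.range n, X i t ^ 2 :=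
        Finset.sum_le_sum_of_subset_of_nonneg hFsub (fun i _ _ => sq_nonneg _)
    _ ≤ ∑ i ∈ Finset.range n, X i s ^ 2 := hanti n hn1 hxn hs ht hst
    _ ≤ ∑' i : ℕ, X i s ^ 2 :=
        Summable.sum_le_tsum _ (fun i _ => sq_nonneg _) (hfin s hs)
end

section
/- Let x ∈ ℓ² with x_n ≥ 0 for all n, X a weak solution with initial condition x, and T > 0. Let c = c(β) be the constant in the tail-measure bound L{t : X_N(t) > M} ≤ c‖x‖²/(k_N M³). Then for all N ≥ 1 with k_N T > c / ‖x‖, one has ∫_0^T X_N(t)³ dt ≤ (c‖x‖²/k_N)(1 + log(‖x‖T/c) + Nβ log 2). In particular, ∫_0^T X_N³ dt = O(N/k_N) as N → ∞. -/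
open MeasureTheory

set_option maxHeartbeats 1000000

/-- Integral estimate for `∫_0^T X_N³`: under the tail-measure bound with
constant `c`, for `N` with `k N * T > c / ‖x‖` one has
`∫_0^T X_N³ ≤ (c‖x‖²/k_N)(1 + log(‖x‖T/c) + Nβ log 2)`. -/
theorem dyadic_integral_X3_bound
    (β : ℝ) (hβ : 0 < β) (k : ℕ → ℝ)
    (hk0 : k 0 = 0) (hk : ∀ n : ℕ, 1 ≤ n → k n = (2:ℝ) ^ (β * (n:ℝ)))
    (x : ℕ → ℝ) (hx0 : x 0 = 0) (hxnn : ∀ n : ℕ, 0 ≤ x n)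
    (hxl2 : Summable (fun n : ℕ => (x n) ^ 2))
    (nx : ℝ) (hnx : nx = Real.sqrt (∑' n : ℕ, (x n) ^ 2))
    (X : ℕ → ℝ → ℝ) (hX0 : ∀ t : ℝ, X 0 t = 0)
    (hinit : ∀ n : ℕ, X n 0 = x n)
    (hsol : ∀ n : ℕ, 1 ≤ n → ∀ t : ℝ, 0 ≤ t →
      HasDerivAt (X n)
        (k (n-1) * (X (n-1) t) ^ 2 - k n * X n t * X (n+1) t) t)
    (T : ℝ) (hT : 0 < T)
    (c : ℝ) (hc : 0 < c)
    (N : ℕ) (hN : 1 ≤ N)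
    (hbdd : ∀ t : ℝ, 0 ≤ t → X N t ∈ Set.Icc 0 nx)
    (htail : ∀ M : ℝ, 0 < M →
      volume {t : ℝ | 0 ≤ t ∧ M < X N t}
        ≤ ENNReal.ofReal (c * nx ^ 2 / (k N * M ^ 3)))
    (hNT : c / nx < k N * T) :
    ∫ t in (0:ℝ)..T, (X N t) ^ 3
      ≤ c * nx ^ 2 / k N
        * (1 + Real.log (nx * T / c) + (N:ℝ) * β * Real.log 2) := by
  have hnxnn : 0 ≤ nx := by
    rw [hnx]; exact Real.sqrt_nonneg _
  rcases eq_or_lt_of_le hnxnn with hnx0 | hnxpos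
  · -- nx = 0 : X N vanishes on [0, T]
    have hXz : ∀ t : ℝ, 0 ≤ t → X N t = 0 := by
      intro t ht
      have := hbdd t ht
      rw [← hnx0] at this
      exact le_antisymm this.2 this.1
    have h1 : ∫ t in (0:ℝ)..T, (X N t) ^ 3 = 0 := by
      rw [intervalIntegral.integral_congr (g := fun _ => (0:ℝ))
        (fun t ht => by
          rw [Set.uIcc_of_le hT.le] at ht
          simp [hXz t ht.1])]
      simp
    rw [h1, ← hnx0]
    norm_num
  -- main case
  have hkN : k N = (2:ℝ) ^ (β * (N:ℝ)) := hk N hN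
  have hkpos : 0 < k N := by rw [hkN]; exact Real.rpow_pos_of_pos (by norm_num) _
  set f := X N with hf
  set M0 : ℝ := (c * nx ^ 2 / (k N * T)) ^ ((1:ℝ)/3) with hM0
  have hA : 0 < c * nx ^ 2 / (k N * T) := by positivity
  have hM0pos : 0 < M0 := Real.rpow_pos_of_pos hA _
  have hM0cube : M0 ^ (3:ℕ) = c * nx ^ 2 / (k N * T) := by
    rw [hM0, ← Real.rpow_natCast (_ ^ ((1:ℝ)/3)) 3, ← Real.rpow_mul hA.le]
    norm_num
  have hM0lt : M0 < nx := by
    have h1 : M0 ^ (3:ℕ) < nx ^ (3:ℕ) := by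
      rw [hM0cube]
      rw [div_lt_iff₀ hnxpos] at hNT
      rw [div_lt_iff₀ (by positivity)]
      calc c * nx ^ 2 < k N * T * nx * nx ^ 2 :=
            mul_lt_mul_of_pos_right hNT (by positivity)
        _ = nx ^ 3 * (k N * T) := by ring
    exact lt_of_pow_lt_pow_left₀ 3 hnxnn h1
  set μ : Measure ℝ := volume.restrict (Set.Ioc 0 T) with hμ
  have hmble : AEMeasurable f μ := by
    have hcont : ContinuousOn f (Set.Ioc 0 T) := fun t ht =>
      ((hsol N hN t ht.1.le).continuousAt).continuousWithinAt
    exact hcont.aemeasurable measurableSet_Ioc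
  have f_nn : 0 ≤ᵐ[μ] f :=
    ae_restrict_of_forall_mem measurableSet_Ioc (fun t ht => (hbdd t ht.1.le).1)
  -- layer cake
  have hG : ∀ y : ℝ, (∫ t in (0:ℝ)..y, 3 * t ^ 2) = y ^ 3 := by
    intro y
    rw [intervalIntegral.integral_const_mul, integral_pow]
    ring
  have key : ∫⁻ t, ENNReal.ofReal (f t ^ 3) ∂μ
      = ∫⁻ t in Set.Ioi 0, μ {a : ℝ | t < f a} * ENNReal.ofReal (3 * t ^ 2) := by
    have := lintegral_comp_eq_lintegral_meas_lt_mul μ (f := f) (g := fun t => 3 * t ^ 2)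
      f_nn hmble (fun t _ => (continuous_const.mul (continuous_pow 2) : Continuous fun s : ℝ => 3 * s ^ 2).intervalIntegrable 0 t)
      (ae_of_all _ fun t => by positivity)
    simpa [hG] using this
  -- bounds on the tail measure
  have hmeasle : ∀ t : ℝ, μ {a : ℝ | t < f a} ≤ ENNReal.ofReal T := by
    intro t
    rw [Measure.restrict_apply' measurableSet_Ioc]
    calc volume ({a : ℝ | t < f a} ∩ Set.Ioc 0 T) ≤ volume (Set.Ioc 0 T) :=
          measure_mono Set.inter_subset_right
      _ = ENNReal.ofReal T := by rw [Real.volume_Ioc, sub_zero]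
  have hmeastail : ∀ t : ℝ, 0 < t →
      μ {a : ℝ | t < f a} ≤ ENNReal.ofReal (c * nx ^ 2 / (k N * t ^ 3)) := by
    intro t ht
    rw [Measure.restrict_apply' measurableSet_Ioc]
    refine le_trans (measure_mono ?_) (htail t ht)
    rintro a ⟨ha1, ha2⟩
    exact ⟨ha2.1.le, ha1⟩
  have hmeaszero : ∀ t : ℝ, nx < t → μ {a : ℝ | t < f a} = 0 := by
    intro t ht
    rw [Measure.restrict_apply' measurableSet_Ioc]
    have hempty : {a : ℝ | t < f a} ∩ Set.Ioc 0 T = ∅ := by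
      rw [Set.eq_empty_iff_forall_notMem]
      rintro a ⟨ha, h0, hT'⟩
      exact absurd ha (not_lt.2 (((hbdd a h0.le).2).trans ht.le))
    rw [hempty, measure_empty]
  -- split the t-integral
  have hsplit : Set.Ioi (0:ℝ) = (Set.Ioc 0 M0 ∪ Set.Ioc M0 nx) ∪ Set.Ioi nx := by
    rw [Set.Ioc_union_Ioc_eq_Ioc hM0pos.le hM0lt.le, Set.Ioc_union_Ioi_eq_Ioi hnxpos.le]
  set F : ℝ → ENNReal := fun t => μ {a : ℝ | t < f a} * ENNReal.ofReal (3 * t ^ 2) with hF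
  have hsum : ∫⁻ t in Set.Ioi 0, F t
      = (∫⁻ t in Set.Ioc 0 M0, F t) + (∫⁻ t in Set.Ioc M0 nx, F t) + ∫⁻ t in Set.Ioi nx, F t := by
    rw [hsplit, lintegral_union measurableSet_Ioi, lintegral_union measurableSet_Ioc]
    · exact Set.Ioc_disjoint_Ioc_of_le le_rfl
    · rw [Set.Ioc_union_Ioc_eq_Ioc hM0pos.le hM0lt.le]
      exact Set.Ioc_disjoint_Ioi le_rfl
  -- piece 3 is zero
  have hB3 : (∫⁻ t in Set.Ioi nx, F t) = 0 := by
    have hz : ∀ t ∈ Set.Ioi nx, F t = (fun _ : ℝ => (0 : ENNReal)) t := fun t ht => by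
      simp only [hF]
      rw [hmeaszero t ht, zero_mul]
    rw [setLIntegral_congr_fun measurableSet_Ioi hz]
    simp
  -- piece 1
  have hB1 : (∫⁻ t in Set.Ioc 0 M0, F t) ≤ ENNReal.ofReal (c * nx ^ 2 / k N) := by
    have h1 : (∫⁻ t in Set.Ioc 0 M0, F t)
        ≤ ∫⁻ t in Set.Ioc 0 M0, ENNReal.ofReal (T * (3 * t ^ 2)) := by
      refine setLIntegral_mono (by fun_prop) (fun t _ => ?_)
      rw [hF]; simp only
      rw [ENNReal.ofReal_mul hT.le]
      exact mul_le_mul_left (hmeasle t) _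
    have h2 : ∫⁻ t in Set.Ioc 0 M0, ENNReal.ofReal (T * (3 * t ^ 2))
        = ENNReal.ofReal (∫ t in Set.Ioc 0 M0, T * (3 * t ^ 2)) := by
      rw [ofReal_integral_eq_lintegral_ofReal]
      · exact ((continuous_const.mul ((continuous_const.mul (continuous_pow 2))) : Continuous fun t : ℝ => T * (3 * t ^ 2)).integrableOn_Ioc)
      · exact ae_of_all _ fun t => by positivity
    have h3 : ∫ t in Set.Ioc 0 M0, T * (3 * t ^ 2) = c * nx ^ 2 / k N := by
      rw [← intervalIntegral.integral_of_le hM0pos.le,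
        intervalIntegral.integral_const_mul, intervalIntegral.integral_const_mul, integral_pow]
      have heq : T * (3 * ((M0 ^ (2 + 1) - 0 ^ (2 + 1)) / (((2 : ℕ) : ℝ) + 1))) = T * M0 ^ 3 := by
        push_cast; ring
      rw [heq, hM0cube]
      field_simp
    rw [h2, h3] at h1
    exact h1
  -- piece 2
  have hB2 : (∫⁻ t in Set.Ioc M0 nx, F t)
      ≤ ENNReal.ofReal (3 * c * nx ^ 2 / k N * (Real.log nx - Real.log M0)) := by
    have h1 : (∫⁻ t in Set.Ioc M0 nx, F t)
        ≤ ∫⁻ t in Set.Ioc M0 nx, ENNReal.ofReal (3 * c * nx ^ 2 / k N * (1 / t)) := by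
      refine setLIntegral_mono (by fun_prop) (fun t ht => ?_)
      have htpos : 0 < t := hM0pos.trans ht.1
      simp only [hF]
      calc μ {a : ℝ | t < f a} * ENNReal.ofReal (3 * t ^ 2)
          ≤ ENNReal.ofReal (c * nx ^ 2 / (k N * t ^ 3)) * ENNReal.ofReal (3 * t ^ 2) :=
            mul_le_mul_left (hmeastail t htpos) _
        _ = ENNReal.ofReal (c * nx ^ 2 / (k N * t ^ 3) * (3 * t ^ 2)) :=
            (ENNReal.ofReal_mul (by positivity)).symm
        _ = ENNReal.ofReal (3 * c * nx ^ 2 / k N * (1 / t)) := by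
            congr 1
            field_simp
    have h2 : ∫⁻ t in Set.Ioc M0 nx, ENNReal.ofReal (3 * c * nx ^ 2 / k N * (1 / t))
        = ENNReal.ofReal (∫ t in Set.Ioc M0 nx, 3 * c * nx ^ 2 / k N * (1 / t)) := by
      rw [ofReal_integral_eq_lintegral_ofReal]
      · have hcont : ContinuousOn (fun t : ℝ => 3 * c * nx ^ 2 / k N * (1 / t))
            (Set.Icc M0 nx) :=
          continuousOn_const.mul (continuousOn_const.div continuousOn_id
            (fun t ht => ne_of_gt (hM0pos.trans_le ht.1)))
        exact (hcont.integrableOn_compact isCompact_Icc).mono_set Set.Ioc_subset_Icc_self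
      · exact ae_restrict_of_forall_mem measurableSet_Ioc (fun t ht => by
          have htpos : 0 < t := hM0pos.trans ht.1
          positivity)
    have hzero : (0 : ℝ) ∉ Set.uIcc M0 nx := by
      rw [Set.uIcc_of_le hM0lt.le]
      exact fun h => absurd h.1 (not_le.2 hM0pos)
    have h3 : ∫ t in Set.Ioc M0 nx, 3 * c * nx ^ 2 / k N * (1 / t)
        = 3 * c * nx ^ 2 / k N * (Real.log nx - Real.log M0) := by
      rw [← intervalIntegral.integral_of_le hM0lt.le,
        intervalIntegral.integral_const_mul, integral_one_div hzero,
        Real.log_div (ne_of_gt hnxpos) (ne_of_gt hM0pos)]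
    rw [h2, h3] at h1
    exact h1
  -- the logarithmic identity
  have hlogle : Real.log M0 ≤ Real.log nx := Real.log_le_log hM0pos hM0lt.le
  have hRsum : c * nx ^ 2 / k N + 3 * c * nx ^ 2 / k N * (Real.log nx - Real.log M0)
      = c * nx ^ 2 / k N
        * (1 + Real.log (nx * T / c) + (N : ℝ) * β * Real.log 2) := by
    have hlogk : Real.log (k N) = β * (N : ℝ) * Real.log 2 := by
      rw [hkN, Real.log_rpow (by norm_num : (0:ℝ) < 2)]
    have hlogM0 : Real.log M0
        = (1/3) * (Real.log c + 2 * Real.log nx - (β * (N : ℝ) * Real.log 2 + Real.log T)) := by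
      rw [hM0, Real.log_rpow hA,
        Real.log_div (by positivity) (by positivity),
        Real.log_mul (ne_of_gt hc) (by positivity),
        Real.log_mul (ne_of_gt hkpos) (ne_of_gt hT),
        Real.log_pow, hlogk]
      push_cast
      ring
    have hlognTc : Real.log (nx * T / c) = Real.log nx + Real.log T - Real.log c := by
      rw [Real.log_div (by positivity) (ne_of_gt hc),
        Real.log_mul (ne_of_gt hnxpos) (ne_of_gt hT)]
    rw [hlogM0, hlognTc]
    ring
  set R : ℝ := c * nx ^ 2 / k N
      * (1 + Real.log (nx * T / c) + (N : ℝ) * β * Real.log 2) with hR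
  have hRnn : 0 ≤ R := by
    rw [← hRsum]
    have h1 : 0 ≤ 3 * c * nx ^ 2 / k N * (Real.log nx - Real.log M0) :=
      mul_nonneg (by positivity) (sub_nonneg.2 hlogle)
    have h2 : 0 ≤ c * nx ^ 2 / k N := by positivity
    linarith
  have hfinal : ∫⁻ t in Set.Ioi 0, F t ≤ ENNReal.ofReal R := by
    rw [hsum, hB3, add_zero]
    calc (∫⁻ t in Set.Ioc 0 M0, F t) + ∫⁻ t in Set.Ioc M0 nx, F t
        ≤ ENNReal.ofReal (c * nx ^ 2 / k N)
          + ENNReal.ofReal (3 * c * nx ^ 2 / k N * (Real.log nx - Real.log M0)) :=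
          add_le_add hB1 hB2
      _ = ENNReal.ofReal (c * nx ^ 2 / k N
          + 3 * c * nx ^ 2 / k N * (Real.log nx - Real.log M0)) :=
          (ENNReal.ofReal_add (by positivity)
            (mul_nonneg (by positivity) (sub_nonneg.2 hlogle))).symm
      _ = ENNReal.ofReal R := by rw [hRsum]
  -- conclude
  have hnn3 : 0 ≤ᵐ[μ] fun t => f t ^ 3 := f_nn.mono fun t ht => pow_nonneg ht 3
  have hsm : AEStronglyMeasurable (fun t => f t ^ 3) μ :=
    (hmble.pow_const 3).aestronglyMeasurable
  calc ∫ t in (0:ℝ)..T, f t ^ 3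
      = ∫ t in Set.Ioc 0 T, f t ^ 3 := intervalIntegral.integral_of_le hT.le
    _ = (∫⁻ t, ENNReal.ofReal (f t ^ 3) ∂μ).toReal :=
        integral_eq_lintegral_of_nonneg_ae hnn3 hsm
    _ ≤ (ENNReal.ofReal R).toReal :=
        ENNReal.toReal_mono ENNReal.ofReal_ne_top (key.trans_le hfinal)
    _ = R := ENNReal.toReal_ofReal hRnn
end

section
/- (Uniqueness) Let β > 0 and x ∈ ℓ² with x_n ≥ 0 for all n. Then there is at most one weak solution X of the dyadic model with initial condition x. (Equivalently: if X and Y are two weak solutions with the same non-negative ℓ² initial condition, then X_n(t) = Y_n(t) for all n and t ≥ 0.) -/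
open MeasureTheory Set intervalIntegral Filter

/-- continuity at all nonneg times -/
private def CAo (f : ℝ → ℝ) : Prop := ∀ t : ℝ, 0 ≤ t → ContinuousAt f t

private lemma CAo.mul {f g : ℝ → ℝ} (hf : CAo f) (hg : CAo g) :
    CAo (fun s => f s * g s) := fun t ht => (hf t ht).mul (hg t ht)

private lemma CAo.pow {f : ℝ → ℝ} (hf : CAo f) (m : ℕ) :
    CAo (fun s => f s ^ m) := fun t ht => (hf t ht).pow m

private lemma CAo.const (c : ℝ) : CAo (fun _ => c) := fun _ _ => continuousAt_const

private lemma CAo.const_mul {f : ℝ → ℝ} (hf : CAo f) (c : ℝ) :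
    CAo (fun s => c * f s) := fun t ht => (continuousAt_const).mul (hf t ht)

private lemma CAo.add {f g : ℝ → ℝ} (hf : CAo f) (hg : CAo g) :
    CAo (fun s => f s + g s) := fun t ht => (hf t ht).add (hg t ht)

private lemma CAo.sub {f g : ℝ → ℝ} (hf : CAo f) (hg : CAo g) :
    CAo (fun s => f s - g s) := fun t ht => (hf t ht).sub (hg t ht)

private lemma CAo.sqrt {f : ℝ → ℝ} (hf : CAo f) :
    CAo (fun s => Real.sqrt (f s)) := fun t ht =>
  Real.continuous_sqrt.continuousAt.comp (hf t ht)

private lemma CAo.intInt {f : ℝ → ℝ} (hf : CAo f) {T : ℝ} (hT : 0 ≤ T) :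
    IntervalIntegrable f volume 0 T := by
  apply ContinuousOn.intervalIntegrable
  rw [uIcc_of_le hT]
  exact fun t ht => (hf t ht.1).continuousWithinAt

/-- monotonicity from derivative on the interior -/
private lemma aux_mono {f f' : ℝ → ℝ} {T : ℝ} (hT : 0 ≤ T)
    (hc : ContinuousOn f (Icc 0 T))
    (hd : ∀ t, t ∈ Ioo (0:ℝ) T → HasDerivAt f (f' t) t)
    (hnn : ∀ t, t ∈ Ioo (0:ℝ) T → 0 ≤ f' t) : f 0 ≤ f T := by
  rcases eq_or_lt_of_le hT with h | h
  · rw [← h]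
  · have hmono := monotoneOn_of_hasDerivWithinAt_nonneg (convex_Icc (0:ℝ) T) hc
      (f' := f') (fun s hs => by
        rw [interior_Icc] at hs
        exact (hd s hs).hasDerivWithinAt)
      (fun s hs => by rw [interior_Icc] at hs; exact hnn s hs)
    exact hmono (left_mem_Icc.2 hT) (right_mem_Icc.2 hT) hT

/-- FTC for our setting -/
private lemma aux_ftc {f f' : ℝ → ℝ} {T : ℝ} (hT : 0 ≤ T)
    (hd : ∀ t, 0 ≤ t → HasDerivAt f (f' t) t)
    (hi : IntervalIntegrable f' volume 0 T) :
    ∫ s in (0:ℝ)..T, f' s = f T - f 0 :=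
  intervalIntegral.integral_eq_sub_of_hasDerivAt
    (fun t ht => hd t (by rw [uIcc_of_le hT] at ht; exact ht.1)) hi

/-- Cauchy-Schwarz for interval integrals -/
private lemma aux_CS {u v : ℝ → ℝ} {T : ℝ} (hT : 0 ≤ T)
    (hu : CAo u) (hv : CAo v) :
    (∫ s in (0:ℝ)..T, u s * v s) ^ 2 ≤
      (∫ s in (0:ℝ)..T, u s ^ 2) * (∫ s in (0:ℝ)..T, v s ^ 2) := by
  set A := ∫ s in (0:ℝ)..T, u s ^ 2 with hA
  set B := ∫ s in (0:ℝ)..T, u s * v s with hB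
  set C := ∫ s in (0:ℝ)..T, v s ^ 2 with hC
  have key : ∀ lam : ℝ, 0 ≤ A * (lam * lam) + (-2 * B) * lam + C := by
    intro lam
    have h1 : (0:ℝ) ≤ ∫ s in (0:ℝ)..T, (lam * u s - v s) ^ 2 :=
      intervalIntegral.integral_nonneg hT (fun s _ => sq_nonneg _)
    have h2 : ∫ s in (0:ℝ)..T, (lam * u s - v s) ^ 2
        = lam ^ 2 * A - 2 * lam * B + C := by
      have e1 : (fun s => (lam * u s - v s) ^ 2)
          = fun s => (lam ^ 2 * u s ^ 2 - 2 * lam * (u s * v s)) + v s ^ 2 := by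
        funext s; ring
      rw [e1, intervalIntegral.integral_add, intervalIntegral.integral_sub]
      · rw [intervalIntegral.integral_const_mul, intervalIntegral.integral_const_mul]
      · exact ((hu.pow 2).const_mul (lam ^ 2)).intInt hT
      · exact ((hu.mul hv).const_mul (2 * lam)).intInt hT
      · exact (((hu.pow 2).const_mul (lam ^ 2)).sub ((hu.mul hv).const_mul (2 * lam))).intInt hT
      · exact (hv.pow 2).intInt hT
    nlinarith [h1, h2]
  have hd := discrim_le_zero key
  rw [discrim] at hd
  nlinarith [hd]

private lemma aux_holder3 {f g : ℝ → ℝ} {T c : ℝ} (hT : 0 ≤ T) (hc : 0 ≤ c)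
    (hf : CAo f) (hg : CAo g)
    (hfnn : ∀ t : ℝ, 0 ≤ t → 0 ≤ f t) (hgnn : ∀ t : ℝ, 0 ≤ t → 0 ≤ g t) :
    (∫ s in (0:ℝ)..T, c * f s * g s ^ 2) ^ 3 ≤
      (∫ s in (0:ℝ)..T, c * f s ^ 3) * (∫ s in (0:ℝ)..T, c * g s ^ 3) ^ 2 := by
  set P := ∫ s in (0:ℝ)..T, c * f s * g s ^ 2 with hP
  set Q := ∫ s in (0:ℝ)..T, c * f s ^ 2 * g s with hQ
  set F := ∫ s in (0:ℝ)..T, c * f s ^ 3 with hF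
  set G := ∫ s in (0:ℝ)..T, c * g s ^ 3 with hG
  have hIcc : ∀ s ∈ uIcc (0:ℝ) T, 0 ≤ s := by
    intro s hs; rw [uIcc_of_le hT] at hs; exact hs.1
  have hPnn : 0 ≤ P := intervalIntegral.integral_nonneg hT
    (fun s hs => by
      have := hfnn s hs.1; have := hgnn s hs.1; positivity)
  have hQnn : 0 ≤ Q := intervalIntegral.integral_nonneg hT
    (fun s hs => by
      have := hfnn s hs.1; have := hgnn s hs.1; positivity)
  have hFnn : 0 ≤ F := intervalIntegral.integral_nonneg hT
    (fun s hs => by have := hfnn s hs.1; positivity)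
  have hGnn : 0 ≤ G := intervalIntegral.integral_nonneg hT
    (fun s hs => by have := hgnn s hs.1; positivity)
  have hcc : Real.sqrt c * Real.sqrt c = c := Real.mul_self_sqrt hc
  -- step 1 : P^2 ≤ Q * G
  have h1 : P ^ 2 ≤ Q * G := by
    have hu : CAo (fun s => Real.sqrt c * (f s * Real.sqrt (g s))) := by
      intro t ht
      exact continuousAt_const.mul ((hf t ht).mul (Real.continuous_sqrt.continuousAt.comp (hg t ht)))
    have hv : CAo (fun s => Real.sqrt c * (g s * Real.sqrt (g s))) := by
      intro t ht
      exact continuousAt_const.mul ((hg t ht).mul (Real.continuous_sqrt.continuousAt.comp (hg t ht)))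
    have key := aux_CS hT hu hv
    have e1 : (∫ s in (0:ℝ)..T, (Real.sqrt c * (f s * Real.sqrt (g s))) *
        (Real.sqrt c * (g s * Real.sqrt (g s)))) = P := by
      apply intervalIntegral.integral_congr
      intro s hs
      have hgg : Real.sqrt (g s) * Real.sqrt (g s) = g s := Real.mul_self_sqrt (hgnn s (hIcc s hs))
      show (Real.sqrt c * (f s * Real.sqrt (g s))) * (Real.sqrt c * (g s * Real.sqrt (g s)))
          = c * f s * g s ^ 2
      rw [show (Real.sqrt c * (f s * Real.sqrt (g s))) * (Real.sqrt c * (g s * Real.sqrt (g s)))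
        = (Real.sqrt c * Real.sqrt c) * (Real.sqrt (g s) * Real.sqrt (g s)) * (f s * g s) from by ring,
        hcc, hgg]
      ring
    have e2 : (∫ s in (0:ℝ)..T, (Real.sqrt c * (f s * Real.sqrt (g s))) ^ 2) = Q := by
      apply intervalIntegral.integral_congr
      intro s hs
      have hgg : Real.sqrt (g s) * Real.sqrt (g s) = g s := Real.mul_self_sqrt (hgnn s (hIcc s hs))
      show (Real.sqrt c * (f s * Real.sqrt (g s))) ^ 2 = c * f s ^ 2 * g s
      rw [show (Real.sqrt c * (f s * Real.sqrt (g s))) ^ 2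
        = (Real.sqrt c * Real.sqrt c) * (Real.sqrt (g s) * Real.sqrt (g s)) * (f s * f s) from by ring,
        hcc, hgg]
      ring
    have e3 : (∫ s in (0:ℝ)..T, (Real.sqrt c * (g s * Real.sqrt (g s))) ^ 2) = G := by
      apply intervalIntegral.integral_congr
      intro s hs
      have hgg : Real.sqrt (g s) * Real.sqrt (g s) = g s := Real.mul_self_sqrt (hgnn s (hIcc s hs))
      show (Real.sqrt c * (g s * Real.sqrt (g s))) ^ 2 = c * g s ^ 3
      rw [show (Real.sqrt c * (g s * Real.sqrt (g s))) ^ 2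
        = (Real.sqrt c * Real.sqrt c) * (Real.sqrt (g s) * Real.sqrt (g s)) * (g s * g s) from by ring,
        hcc, hgg]
      ring
    rw [e1, e2, e3] at key
    exact key
  -- step 2 : Q^2 ≤ F * P
  have h2 : Q ^ 2 ≤ F * P := by
    have hu : CAo (fun s => Real.sqrt c * (f s * Real.sqrt (f s))) := by
      intro t ht
      exact continuousAt_const.mul ((hf t ht).mul (Real.continuous_sqrt.continuousAt.comp (hf t ht)))
    have hv : CAo (fun s => Real.sqrt c * (g s * Real.sqrt (f s))) := by
      intro t ht
      exact continuousAt_const.mul ((hg t ht).mul (Real.continuous_sqrt.continuousAt.comp (hf t ht)))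
    have key := aux_CS hT hu hv
    have e1 : (∫ s in (0:ℝ)..T, (Real.sqrt c * (f s * Real.sqrt (f s))) *
        (Real.sqrt c * (g s * Real.sqrt (f s)))) = Q := by
      apply intervalIntegral.integral_congr
      intro s hs
      have hff : Real.sqrt (f s) * Real.sqrt (f s) = f s := Real.mul_self_sqrt (hfnn s (hIcc s hs))
      show (Real.sqrt c * (f s * Real.sqrt (f s))) * (Real.sqrt c * (g s * Real.sqrt (f s)))
          = c * f s ^ 2 * g s
      rw [show (Real.sqrt c * (f s * Real.sqrt (f s))) * (Real.sqrt c * (g s * Real.sqrt (f s)))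
        = (Real.sqrt c * Real.sqrt c) * (Real.sqrt (f s) * Real.sqrt (f s)) * (f s * g s) from by ring,
        hcc, hff]
      ring
    have e2 : (∫ s in (0:ℝ)..T, (Real.sqrt c * (f s * Real.sqrt (f s))) ^ 2) = F := by
      apply intervalIntegral.integral_congr
      intro s hs
      have hff : Real.sqrt (f s) * Real.sqrt (f s) = f s := Real.mul_self_sqrt (hfnn s (hIcc s hs))
      show (Real.sqrt c * (f s * Real.sqrt (f s))) ^ 2 = c * f s ^ 3
      rw [show (Real.sqrt c * (f s * Real.sqrt (f s))) ^ 2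
        = (Real.sqrt c * Real.sqrt c) * (Real.sqrt (f s) * Real.sqrt (f s)) * (f s * f s) from by ring,
        hcc, hff]
      ring
    have e3 : (∫ s in (0:ℝ)..T, (Real.sqrt c * (g s * Real.sqrt (f s))) ^ 2) = P := by
      apply intervalIntegral.integral_congr
      intro s hs
      have hff : Real.sqrt (f s) * Real.sqrt (f s) = f s := Real.mul_self_sqrt (hfnn s (hIcc s hs))
      show (Real.sqrt c * (g s * Real.sqrt (f s))) ^ 2 = c * f s * g s ^ 2
      rw [show (Real.sqrt c * (g s * Real.sqrt (f s))) ^ 2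
        = (Real.sqrt c * Real.sqrt c) * (Real.sqrt (f s) * Real.sqrt (f s)) * (g s * g s) from by ring,
        hcc, hff]
      ring
    rw [e1, e2, e3] at key
    exact key
  -- combine
  rcases eq_or_lt_of_le hPnn with hP0 | hP0
  · rw [← hP0]
    simpa using mul_nonneg hFnn (sq_nonneg G)
  · have h4 : (P ^ 2) * (P ^ 2) ≤ (Q * G) * (Q * G) :=
      mul_self_le_mul_self (sq_nonneg P) h1
    have h5 : (Q * G) * (Q * G) = Q ^ 2 * G ^ 2 := by ring
    have h6 : Q ^ 2 * G ^ 2 ≤ (F * P) * G ^ 2 :=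
      mul_le_mul_of_nonneg_right h2 (sq_nonneg G)
    have h7 : P * P ^ 3 ≤ P * (F * G ^ 2) := by nlinarith
    have := le_of_mul_le_mul_left h7 hP0
    linarith

private lemma aux_nat_le (n : ℕ) : (n:ℝ) ≤ 4 * (2:ℝ) ^ ((n:ℝ)/2) := by
  have h1 : (2:ℝ) ^ ((n:ℝ)/2) = (Real.sqrt 2) ^ n := by
    rw [show ((n:ℝ)/2) = ((1:ℝ)/2) * n by ring, Real.rpow_mul (by norm_num : (0:ℝ) ≤ 2),
      ← Real.sqrt_eq_rpow, Real.rpow_natCast]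
  have h3 : (0.4:ℝ) ≤ Real.sqrt 2 - 1 := by
    nlinarith [Real.sq_sqrt (by norm_num : (0:ℝ) ≤ 2), Real.sqrt_nonneg 2]
  have h2 : 1 + (n:ℝ) * (Real.sqrt 2 - 1) ≤ (1 + (Real.sqrt 2 - 1)) ^ n :=
    one_add_mul_le_pow (by nlinarith) n
  have h4 : (1 + (Real.sqrt 2 - 1)) = Real.sqrt 2 := by ring
  rw [h4] at h2
  have h5 : (0.4:ℝ) * n ≤ Real.sqrt 2 ^ n := by nlinarith [Nat.cast_nonneg (α := ℝ) n]
  rw [h1]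
  nlinarith

section OneSol

variable {β : ℝ} {k : ℕ → ℝ} {x : ℕ → ℝ} {X : ℕ → ℝ → ℝ}

private lemma aux_k_nonneg (hβ : 0 < β) (hk0 : k 0 = 0)
    (hk : ∀ n : ℕ, 1 ≤ n → k n = (2:ℝ) ^ (β * (n:ℝ))) : ∀ n, 0 ≤ k n := by
  intro n
  rcases Nat.eq_zero_or_pos n with rfl | hn
  · rw [hk0]
  · rw [hk n hn]; positivity

private lemma aux_k_mono (hβ : 0 < β) (hk0 : k 0 = 0)
    (hk : ∀ n : ℕ, 1 ≤ n → k n = (2:ℝ) ^ (β * (n:ℝ))) : ∀ n, k n ≤ k (n+1) := by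
  intro n
  rcases Nat.eq_zero_or_pos n with rfl | hn
  · rw [hk0, hk 1 le_rfl]; positivity
  · rw [hk n hn, hk (n+1) (le_trans hn (Nat.le_succ n))]
    apply Real.rpow_le_rpow_of_exponent_le (by norm_num)
    have : (n:ℝ) ≤ (n:ℝ) + 1 := by linarith
    push_cast
    nlinarith

private lemma aux_contAt (hX0 : ∀ t : ℝ, X 0 t = 0)
    (hXsol : ∀ n : ℕ, 1 ≤ n → ∀ t : ℝ, 0 ≤ t →
      HasDerivAt (X n)
        (k (n-1) * (X (n-1) t) ^ 2 - k n * X n t * X (n+1) t) t) :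
    ∀ n, CAo (X n) := by
  intro n
  rcases Nat.eq_zero_or_pos n with rfl | hn
  · have hfun : X 0 = fun _ => (0:ℝ) := funext hX0
    rw [hfun]; intro t _; exact continuousAt_const
  · intro t ht; exact (hXsol n hn t ht).continuousAt

private lemma aux_nonneg (hβ : 0 < β) (hk0 : k 0 = 0)
    (hk : ∀ n : ℕ, 1 ≤ n → k n = (2:ℝ) ^ (β * (n:ℝ)))
    (hxnn : ∀ n : ℕ, 0 ≤ x n)
    (hX0 : ∀ t : ℝ, X 0 t = 0) (hXinit : ∀ n : ℕ, X n 0 = x n)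
    (hXsol : ∀ n : ℕ, 1 ≤ n → ∀ t : ℝ, 0 ≤ t →
      HasDerivAt (X n)
        (k (n-1) * (X (n-1) t) ^ 2 - k n * X n t * X (n+1) t) t) :
    ∀ n, ∀ t : ℝ, 0 ≤ t → 0 ≤ X n t := by
  have hknn := aux_k_nonneg hβ hk0 hk
  have hCA := aux_contAt hX0 hXsol
  intro n t ht
  rcases Nat.eq_zero_or_pos n with rfl | hn
  · rw [hX0]
  · set A : ℝ → ℝ := fun u => ∫ s in (0:ℝ)..u, k n * X (n+1) s with hA
    have hcmul : CAo (fun s => k n * X (n+1) s) := fun u hu =>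
      continuousAt_const.mul (hCA (n+1) u hu)
    have hAc : ContinuousOn A (Icc 0 t) := by
      have hint : IntegrableOn (fun s => k n * X (n+1) s) (uIcc (0:ℝ) t) volume := by
        rw [uIcc_of_le ht]
        exact ContinuousOn.integrableOn_Icc (fun s hs => (hcmul s hs.1).continuousWithinAt)
      have := intervalIntegral.continuousOn_primitive_interval (μ := volume) hint
      rwa [uIcc_of_le ht] at this
    have hhc : ContinuousOn (fun u => X n u * Real.exp (A u)) (Icc 0 t) :=
      ContinuousOn.mul (fun s hs => (hCA n s hs.1).continuousWithinAt)
        (Real.continuous_exp.comp_continuousOn hAc)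
    have hkey : X n 0 * Real.exp (A 0) ≤ X n t * Real.exp (A t) := by
      apply aux_mono (f' := fun s => Real.exp (A s) * (k (n-1) * X (n-1) s ^ 2)) ht hhc
      · intro s hs
        have hs0 : (0:ℝ) ≤ s := hs.1.le
        have hAd : HasDerivAt A (k n * X (n+1) s) s := by
          apply intervalIntegral.integral_hasDerivAt_right (hcmul.intInt hs0)
          · exact ContinuousOn.stronglyMeasurableAtFilter isOpen_Ioi
              (fun u hu => (hcmul u (le_of_lt hu)).continuousWithinAt) s hs.1
          · exact hcmul s hs0
        have h1 := (hXsol n hn s hs0).mul hAd.exp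
        refine h1.congr_deriv ?_
        ring
      · intro s hs
        have := hknn (n-1)
        positivity
    have hA0 : A 0 = 0 := intervalIntegral.integral_same
    rw [hXinit, hA0, Real.exp_zero, mul_one] at hkey
    nlinarith [Real.exp_pos (A t), hxnn n, hkey]

private lemma aux_Ederiv (hk0 : k 0 = 0)
    (hX0 : ∀ t : ℝ, X 0 t = 0)
    (hXsol : ∀ n : ℕ, 1 ≤ n → ∀ t : ℝ, 0 ≤ t →
      HasDerivAt (X n)
        (k (n-1) * (X (n-1) t) ^ 2 - k n * X n t * X (n+1) t) t) :
    ∀ N : ℕ, ∀ t : ℝ, 0 ≤ t →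
      HasDerivAt (fun s => ∑ m ∈ Finset.range (N+1), X m s ^ 2)
        (-(2 * k N * X N t ^ 2 * X (N+1) t)) t := by
  intro N
  induction N with
  | zero =>
    intro t ht
    have hfun : (fun s => ∑ m ∈ Finset.range 1, X m s ^ 2) = fun _ => (0:ℝ) := by
      funext s; simp [hX0]
    rw [hfun]
    have hv : -(2 * k 0 * X 0 t ^ 2 * X 1 t) = 0 := by rw [hk0]; ring
    rw [hv]
    exact hasDerivAt_const t 0
  | succ N ih =>
    intro t ht
    have h1 : (fun s => ∑ m ∈ Finset.range (N+1+1), X m s ^ 2)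
        = fun s => (∑ m ∈ Finset.range (N+1), X m s ^ 2) + X (N+1) s ^ 2 := by
      funext s; rw [Finset.sum_range_succ]
    rw [h1]
    have h2 := (hXsol (N+1) (Nat.le_add_left 1 N) t ht).pow 2
    have h3 := (ih t ht).add h2
    refine h3.congr_deriv ?_
    simp only [Nat.add_sub_cancel, pow_one]
    push_cast
    ring

private lemma aux_sq_le (hβ : 0 < β) (hk0 : k 0 = 0)
    (hk : ∀ n : ℕ, 1 ≤ n → k n = (2:ℝ) ^ (β * (n:ℝ)))
    (hxnn : ∀ n : ℕ, 0 ≤ x n) (hxl2 : Summable (fun n : ℕ => (x n) ^ 2))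
    (hX0 : ∀ t : ℝ, X 0 t = 0) (hXinit : ∀ n : ℕ, X n 0 = x n)
    (hXsol : ∀ n : ℕ, 1 ≤ n → ∀ t : ℝ, 0 ≤ t →
      HasDerivAt (X n)
        (k (n-1) * (X (n-1) t) ^ 2 - k n * X n t * X (n+1) t) t) :
    ∀ n, ∀ t : ℝ, 0 ≤ t → X n t ^ 2 ≤ ∑' m, x m ^ 2 := by
  have hknn := aux_k_nonneg hβ hk0 hk
  have hXnn := aux_nonneg hβ hk0 hk hxnn hX0 hXinit hXsol
  intro n t ht
  have hmono : -(∑ m ∈ Finset.range (n+1), X m 0 ^ 2) ≤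
      -(∑ m ∈ Finset.range (n+1), X m t ^ 2) := by
    refine aux_mono (f := fun s => -∑ m ∈ Finset.range (n+1), X m s ^ 2)
      (f' := fun s => 2 * k n * X n s ^ 2 * X (n+1) s) ht ?_ ?_ ?_
    · intro s hs
      exact ContinuousOn.neg (fun u hu =>
        ((aux_Ederiv hk0 hX0 hXsol n u hu.1).continuousAt).continuousWithinAt) s hs
    · intro s hs
      have := (aux_Ederiv hk0 hX0 hXsol n s hs.1.le).neg
      refine this.congr_deriv ?_
      ring
    · intro s hs
      have h1 := hXnn (n+1) s hs.1.le
      have h2 := hknn n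
      positivity
  have hsingle : X n t ^ 2 ≤ ∑ m ∈ Finset.range (n+1), X m t ^ 2 :=
    Finset.single_le_sum (f := fun m => X m t ^ 2) (fun i _ => sq_nonneg _)
      (Finset.self_mem_range_succ n)
  have hinit : ∑ m ∈ Finset.range (n+1), X m 0 ^ 2 = ∑ m ∈ Finset.range (n+1), x m ^ 2 := by
    apply Finset.sum_congr rfl
    intro m _
    rw [hXinit]
  have htsum : ∑ m ∈ Finset.range (n+1), x m ^ 2 ≤ ∑' m, x m ^ 2 :=
    Summable.sum_le_tsum _ (fun i _ => sq_nonneg _) hxl2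
  rw [hinit] at hmono
  linarith

end OneSol

private lemma aux_le_sqrt {a M : ℝ} (ha : 0 ≤ a) (h : a ^ 2 ≤ M) : a ≤ Real.sqrt M := by
  have hM : 0 ≤ M := le_trans (sq_nonneg a) h
  nlinarith [Real.sq_sqrt hM, Real.sqrt_nonneg M]

/-- (∫ c f g²)² ≤ (∫ c f² g)(∫ c g³) -/
private lemma aux_CS_PQG {f g : ℝ → ℝ} {T c : ℝ} (hT : 0 ≤ T) (hc : 0 ≤ c)
    (hf : CAo f) (hg : CAo g)
    (hgnn : ∀ t : ℝ, 0 ≤ t → 0 ≤ g t) :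
    (∫ s in (0:ℝ)..T, c * f s * g s ^ 2) ^ 2 ≤
      (∫ s in (0:ℝ)..T, c * f s ^ 2 * g s) * (∫ s in (0:ℝ)..T, c * g s ^ 3) := by
  have hIcc : ∀ s ∈ uIcc (0:ℝ) T, 0 ≤ s := by
    intro s hs; rw [uIcc_of_le hT] at hs; exact hs.1
  have hcc : Real.sqrt c * Real.sqrt c = c := Real.mul_self_sqrt hc
  have hu : CAo (fun s => Real.sqrt c * (f s * Real.sqrt (g s))) := fun t ht =>
    continuousAt_const.mul ((hf t ht).mul (Real.continuous_sqrt.continuousAt.comp (hg t ht)))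
  have hv : CAo (fun s => Real.sqrt c * (g s * Real.sqrt (g s))) := fun t ht =>
    continuousAt_const.mul ((hg t ht).mul (Real.continuous_sqrt.continuousAt.comp (hg t ht)))
  have key := aux_CS hT hu hv
  have e1 : (∫ s in (0:ℝ)..T, (Real.sqrt c * (f s * Real.sqrt (g s))) *
      (Real.sqrt c * (g s * Real.sqrt (g s)))) = ∫ s in (0:ℝ)..T, c * f s * g s ^ 2 := by
    apply intervalIntegral.integral_congr
    intro s hs
    have hgg : Real.sqrt (g s) * Real.sqrt (g s) = g s := Real.mul_self_sqrt (hgnn s (hIcc s hs))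
    show (Real.sqrt c * (f s * Real.sqrt (g s))) * (Real.sqrt c * (g s * Real.sqrt (g s)))
        = c * f s * g s ^ 2
    rw [show (Real.sqrt c * (f s * Real.sqrt (g s))) * (Real.sqrt c * (g s * Real.sqrt (g s)))
      = (Real.sqrt c * Real.sqrt c) * (Real.sqrt (g s) * Real.sqrt (g s)) * (f s * g s) from by
        ring, hcc, hgg]
    ring
  have e2 : (∫ s in (0:ℝ)..T, (Real.sqrt c * (f s * Real.sqrt (g s))) ^ 2)
      = ∫ s in (0:ℝ)..T, c * f s ^ 2 * g s := by
    apply intervalIntegral.integral_congr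
    intro s hs
    have hgg : Real.sqrt (g s) * Real.sqrt (g s) = g s := Real.mul_self_sqrt (hgnn s (hIcc s hs))
    show (Real.sqrt c * (f s * Real.sqrt (g s))) ^ 2 = c * f s ^ 2 * g s
    rw [show (Real.sqrt c * (f s * Real.sqrt (g s))) ^ 2
      = (Real.sqrt c * Real.sqrt c) * (Real.sqrt (g s) * Real.sqrt (g s)) * (f s * f s) from by
        ring, hcc, hgg]
    ring
  have e3 : (∫ s in (0:ℝ)..T, (Real.sqrt c * (g s * Real.sqrt (g s))) ^ 2)
      = ∫ s in (0:ℝ)..T, c * g s ^ 3 := by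
    apply intervalIntegral.integral_congr
    intro s hs
    have hgg : Real.sqrt (g s) * Real.sqrt (g s) = g s := Real.mul_self_sqrt (hgnn s (hIcc s hs))
    show (Real.sqrt c * (g s * Real.sqrt (g s))) ^ 2 = c * g s ^ 3
    rw [show (Real.sqrt c * (g s * Real.sqrt (g s))) ^ 2
      = (Real.sqrt c * Real.sqrt c) * (Real.sqrt (g s) * Real.sqrt (g s)) * (g s * g s) from by
        ring, hcc, hgg]
    ring
  rw [e1, e2, e3] at key
  exact key

/-- (∫ c (f g h))² ≤ (∫ c f² g)(∫ c g h²) -/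
private lemma aux_CS_3 {f g h : ℝ → ℝ} {T c : ℝ} (hT : 0 ≤ T) (hc : 0 ≤ c)
    (hf : CAo f) (hg : CAo g) (hh : CAo h)
    (hgnn : ∀ t : ℝ, 0 ≤ t → 0 ≤ g t) :
    (∫ s in (0:ℝ)..T, c * (f s * g s * h s)) ^ 2 ≤
      (∫ s in (0:ℝ)..T, c * f s ^ 2 * g s) * (∫ s in (0:ℝ)..T, c * g s * h s ^ 2) := by
  have hIcc : ∀ s ∈ uIcc (0:ℝ) T, 0 ≤ s := by
    intro s hs; rw [uIcc_of_le hT] at hs; exact hs.1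
  have hcc : Real.sqrt c * Real.sqrt c = c := Real.mul_self_sqrt hc
  have hu : CAo (fun s => Real.sqrt c * (f s * Real.sqrt (g s))) := fun t ht =>
    continuousAt_const.mul ((hf t ht).mul (Real.continuous_sqrt.continuousAt.comp (hg t ht)))
  have hv : CAo (fun s => Real.sqrt c * (h s * Real.sqrt (g s))) := fun t ht =>
    continuousAt_const.mul ((hh t ht).mul (Real.continuous_sqrt.continuousAt.comp (hg t ht)))
  have key := aux_CS hT hu hv
  have e1 : (∫ s in (0:ℝ)..T, (Real.sqrt c * (f s * Real.sqrt (g s))) *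
      (Real.sqrt c * (h s * Real.sqrt (g s)))) = ∫ s in (0:ℝ)..T, c * (f s * g s * h s) := by
    apply intervalIntegral.integral_congr
    intro s hs
    have hgg : Real.sqrt (g s) * Real.sqrt (g s) = g s := Real.mul_self_sqrt (hgnn s (hIcc s hs))
    show (Real.sqrt c * (f s * Real.sqrt (g s))) * (Real.sqrt c * (h s * Real.sqrt (g s)))
        = c * (f s * g s * h s)
    rw [show (Real.sqrt c * (f s * Real.sqrt (g s))) * (Real.sqrt c * (h s * Real.sqrt (g s)))
      = (Real.sqrt c * Real.sqrt c) * (Real.sqrt (g s) * Real.sqrt (g s)) * (f s * h s) from by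
        ring, hcc, hgg]
    ring
  have e2 : (∫ s in (0:ℝ)..T, (Real.sqrt c * (f s * Real.sqrt (g s))) ^ 2)
      = ∫ s in (0:ℝ)..T, c * f s ^ 2 * g s := by
    apply intervalIntegral.integral_congr
    intro s hs
    have hgg : Real.sqrt (g s) * Real.sqrt (g s) = g s := Real.mul_self_sqrt (hgnn s (hIcc s hs))
    show (Real.sqrt c * (f s * Real.sqrt (g s))) ^ 2 = c * f s ^ 2 * g s
    rw [show (Real.sqrt c * (f s * Real.sqrt (g s))) ^ 2
      = (Real.sqrt c * Real.sqrt c) * (Real.sqrt (g s) * Real.sqrt (g s)) * (f s * f s) from by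
        ring, hcc, hgg]
    ring
  have e3 : (∫ s in (0:ℝ)..T, (Real.sqrt c * (h s * Real.sqrt (g s))) ^ 2)
      = ∫ s in (0:ℝ)..T, c * g s * h s ^ 2 := by
    apply intervalIntegral.integral_congr
    intro s hs
    have hgg : Real.sqrt (g s) * Real.sqrt (g s) = g s := Real.mul_self_sqrt (hgnn s (hIcc s hs))
    show (Real.sqrt c * (h s * Real.sqrt (g s))) ^ 2 = c * g s * h s ^ 2
    rw [show (Real.sqrt c * (h s * Real.sqrt (g s))) ^ 2
      = (Real.sqrt c * Real.sqrt c) * (Real.sqrt (g s) * Real.sqrt (g s)) * (h s * h s) from by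
        ring, hcc, hgg]
    ring
  rw [e1, e2, e3] at key
  exact key

section OneSol2
variable {β : ℝ} {k : ℕ → ℝ} {x : ℕ → ℝ} {X : ℕ → ℝ → ℝ}

private lemma aux_flux (hβ : 0 < β) (hk0 : k 0 = 0)
    (hk : ∀ n : ℕ, 1 ≤ n → k n = (2:ℝ) ^ (β * (n:ℝ)))
    (hxnn : ∀ n : ℕ, 0 ≤ x n) (hxl2 : Summable (fun n : ℕ => (x n) ^ 2))
    (hX0 : ∀ t : ℝ, X 0 t = 0) (hXinit : ∀ n : ℕ, X n 0 = x n)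
    (hXsol : ∀ n : ℕ, 1 ≤ n → ∀ t : ℝ, 0 ≤ t →
      HasDerivAt (X n)
        (k (n-1) * (X (n-1) t) ^ 2 - k n * X n t * X (n+1) t) t)
    (T : ℝ) (hT : 0 ≤ T) :
    ∀ n : ℕ, ∫ s in (0:ℝ)..T, k n * X n s ^ 2 * X (n+1) s ≤ n * ((∑' m, x m ^ 2)/2) := by
  have hCA := aux_contAt hX0 hXsol
  have hCAf : ∀ m : ℕ, CAo (fun s => k m * X m s ^ 2 * X (m+1) s) := fun m t ht =>
    (continuousAt_const.mul ((hCA m t ht).pow 2)).mul (hCA (m+1) t ht)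
  have Cmul : ∀ (c : ℝ) (f : ℝ → ℝ), CAo f → CAo (fun s => c * f s) :=
    fun c f hf t ht => continuousAt_const.mul (hf t ht)
  intro n
  induction n with
  | zero =>
    have hz : (fun s => k 0 * X 0 s ^ 2 * X 1 s) = fun _ => (0:ℝ) := by
      funext s; rw [hk0]; ring
    rw [hz]
    simp
  | succ n ih =>
    have hd : ∀ t : ℝ, 0 ≤ t → HasDerivAt (fun s => X (n+1) s ^ 2)
        (2 * (k n * X n t ^ 2 * X (n+1) t) - 2 * (k (n+1) * X (n+1) t ^ 2 * X (n+2) t)) t := by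
      intro t ht
      have h2 := (hXsol (n+1) (Nat.le_add_left 1 n) t ht).pow 2
      refine h2.congr_deriv ?_
      simp only [Nat.add_sub_cancel, pow_one]
      push_cast
      ring
    have hi1 : IntervalIntegrable (fun s => 2 * (k n * X n s ^ 2 * X (n+1) s)) volume 0 T :=
      (Cmul 2 _ (hCAf n)).intInt hT
    have hi2 : IntervalIntegrable (fun s => 2 * (k (n+1) * X (n+1) s ^ 2 * X (n+2) s)) volume 0 T :=
      (Cmul 2 _ (hCAf (n+1))).intInt hT
    have hftc := aux_ftc hT hd (hi1.sub hi2)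
    rw [intervalIntegral.integral_sub hi1 hi2, intervalIntegral.integral_const_mul,
      intervalIntegral.integral_const_mul, hXinit] at hftc
    have hx2 : x (n+1) ^ 2 ≤ ∑' m, x m ^ 2 := Summable.le_tsum hxl2 (n+1) (fun _ _ => sq_nonneg _)
    have hXT : 0 ≤ X (n+1) T ^ 2 := sq_nonneg _
    push_cast
    linarith [ih]

private lemma aux_cube_id (hβ : 0 < β) (hk0 : k 0 = 0)
    (hk : ∀ n : ℕ, 1 ≤ n → k n = (2:ℝ) ^ (β * (n:ℝ)))
    (hxnn : ∀ n : ℕ, 0 ≤ x n) (hxl2 : Summable (fun n : ℕ => (x n) ^ 2))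
    (hX0 : ∀ t : ℝ, X 0 t = 0) (hXinit : ∀ n : ℕ, X n 0 = x n)
    (hXsol : ∀ n : ℕ, 1 ≤ n → ∀ t : ℝ, 0 ≤ t →
      HasDerivAt (X n)
        (k (n-1) * (X (n-1) t) ^ 2 - k n * X n t * X (n+1) t) t)
    (T : ℝ) (hT : 0 ≤ T) :
    ∀ n : ℕ, 1 ≤ n →
      ∫ s in (0:ℝ)..T, k n * X n s ^ 3 ≤ (∑' m, x m ^ 2)
        + ((∫ s in (0:ℝ)..T, k n * X n s * X (n+1) s ^ 2)
        + (∫ s in (0:ℝ)..T, k (n+1) * (X n s * X (n+1) s * X (n+2) s))) := by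
  intro n hn
  have hCA := aux_contAt hX0 hXsol
  have hXnn := aux_nonneg hβ hk0 hk hxnn hX0 hXinit hXsol
  have hknn := aux_k_nonneg hβ hk0 hk
  have hsq := aux_sq_le hβ hk0 hk hxnn hxl2 hX0 hXinit hXsol
  have hd : ∀ t : ℝ, 0 ≤ t → HasDerivAt (fun s => X n s * X (n+1) s)
      (k n * X n t ^ 3 + k (n-1) * X (n-1) t ^ 2 * X (n+1) t
        - k n * X n t * X (n+1) t ^ 2 - k (n+1) * (X n t * X (n+1) t * X (n+2) t)) t := by
    intro t ht
    have h1 := (hXsol n hn t ht).mul (hXsol (n+1) (Nat.le_add_left 1 n) t ht)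
    refine h1.congr_deriv ?_
    simp only [Nat.add_sub_cancel]
    ring
  have hg1 : CAo (fun s => k n * X n s ^ 3) := fun t ht =>
    continuousAt_const.mul ((hCA n t ht).pow 3)
  have hg2 : CAo (fun s => k (n-1) * X (n-1) s ^ 2 * X (n+1) s) := fun t ht =>
    (continuousAt_const.mul ((hCA (n-1) t ht).pow 2)).mul (hCA (n+1) t ht)
  have hg3 : CAo (fun s => k n * X n s * X (n+1) s ^ 2) := fun t ht =>
    (continuousAt_const.mul (hCA n t ht)).mul ((hCA (n+1) t ht).pow 2)
  have hg4 : CAo (fun s => k (n+1) * (X n s * X (n+1) s * X (n+2) s)) := fun t ht =>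
    continuousAt_const.mul (((hCA n t ht).mul (hCA (n+1) t ht)).mul (hCA (n+2) t ht))
  have hi1 := hg1.intInt hT
  have hi2 := hg2.intInt hT
  have hi3 := hg3.intInt hT
  have hi4 := hg4.intInt hT
  have hadd : CAo (fun s => k n * X n s ^ 3 + k (n-1) * X (n-1) s ^ 2 * X (n+1) s) :=
    fun t ht => (hg1 t ht).add (hg2 t ht)
  have hsub : CAo (fun s => k n * X n s ^ 3 + k (n-1) * X (n-1) s ^ 2 * X (n+1) s
      - k n * X n s * X (n+1) s ^ 2) := fun t ht => (hadd t ht).sub (hg3 t ht)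
  have hftc := aux_ftc hT hd ((hsub.intInt hT).sub hi4)
  rw [intervalIntegral.integral_sub (hsub.intInt hT) hi4,
    intervalIntegral.integral_sub (hadd.intInt hT) hi3,
    intervalIntegral.integral_add hi1 hi2] at hftc
  have hprod : X n T * X (n+1) T ≤ ∑' m, x m ^ 2 := by
    nlinarith [hsq n T hT, hsq (n+1) T hT, hXnn n T hT, hXnn (n+1) T hT]
  have hinit : 0 ≤ X n 0 * X (n+1) 0 := by
    rw [hXinit, hXinit]
    exact mul_nonneg (hxnn n) (hxnn (n+1))
  have hI2nn : (0:ℝ) ≤ ∫ s in (0:ℝ)..T, k (n-1) * X (n-1) s ^ 2 * X (n+1) s := by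
    apply intervalIntegral.integral_nonneg hT
    intro s hs
    have := hknn (n-1)
    have := hXnn (n+1) s hs.1
    positivity
  linarith

private lemma aux_cube_triv (hβ : 0 < β) (hk0 : k 0 = 0)
    (hk : ∀ n : ℕ, 1 ≤ n → k n = (2:ℝ) ^ (β * (n:ℝ)))
    (hxnn : ∀ n : ℕ, 0 ≤ x n) (hxl2 : Summable (fun n : ℕ => (x n) ^ 2))
    (hX0 : ∀ t : ℝ, X 0 t = 0) (hXinit : ∀ n : ℕ, X n 0 = x n)
    (hXsol : ∀ n : ℕ, 1 ≤ n → ∀ t : ℝ, 0 ≤ t →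
      HasDerivAt (X n)
        (k (n-1) * (X (n-1) t) ^ 2 - k n * X n t * X (n+1) t) t)
    (T : ℝ) (hT : 0 ≤ T) :
    ∀ n : ℕ, 1 ≤ n →
      ∫ s in (0:ℝ)..T, k n * X n s ^ 3
        ≤ (Real.sqrt (∑' m, x m ^ 2) ^ 3 * T) * (2:ℝ) ^ (β * (n:ℝ)) := by
  intro n hn
  have hCA := aux_contAt hX0 hXsol
  have hXnn := aux_nonneg hβ hk0 hk hxnn hX0 hXinit hXsol
  have hknn := aux_k_nonneg hβ hk0 hk
  have hsq := aux_sq_le hβ hk0 hk hxnn hxl2 hX0 hXinit hXsol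
  have hg1 : CAo (fun s => k n * X n s ^ 3) := fun t ht =>
    continuousAt_const.mul ((hCA n t ht).pow 3)
  have hb : ∀ s ∈ Icc (0:ℝ) T, k n * X n s ^ 3
      ≤ k n * Real.sqrt (∑' m, x m ^ 2) ^ 3 := by
    intro s hs
    have h1 : X n s ≤ Real.sqrt (∑' m, x m ^ 2) :=
      aux_le_sqrt (hXnn n s hs.1) (hsq n s hs.1)
    have h2 : X n s ^ 3 ≤ Real.sqrt (∑' m, x m ^ 2) ^ 3 :=
      pow_le_pow_left₀ (hXnn n s hs.1) h1 3
    exact mul_le_mul_of_nonneg_left h2 (hknn n)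
  have hmono := intervalIntegral.integral_mono_on hT (hg1.intInt hT)
    (intervalIntegrable_const) hb
  rw [intervalIntegral.integral_const] at hmono
  calc ∫ s in (0:ℝ)..T, k n * X n s ^ 3
      ≤ (T - 0) • (k n * Real.sqrt (∑' m, x m ^ 2) ^ 3) := hmono
    _ = (Real.sqrt (∑' m, x m ^ 2) ^ 3 * T) * (2:ℝ) ^ (β * (n:ℝ)) := by
        rw [hk n hn]
        simp [smul_eq_mul]
        ring

end OneSol2

private lemma aux_two_mul_le (a : ℝ) : 2*a ≤ (1+a)^2 := by nlinarith [sq_nonneg (1-a)]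

private lemma aux_le_one_add_sq (a : ℝ) (h : 0 ≤ a) : a ≤ (1+a)^2 := by nlinarith

section OneSol3
variable {β : ℝ} {k : ℕ → ℝ} {x : ℕ → ℝ} {X : ℕ → ℝ → ℝ}

set_option maxHeartbeats 2000000 in
private lemma aux_pass (hβ : 0 < β) (hk0 : k 0 = 0)
    (hk : ∀ n : ℕ, 1 ≤ n → k n = (2:ℝ) ^ (β * (n:ℝ)))
    (hxnn : ∀ n : ℕ, 0 ≤ x n) (hxl2 : Summable (fun n : ℕ => (x n) ^ 2))
    (hX0 : ∀ t : ℝ, X 0 t = 0) (hXinit : ∀ n : ℕ, X n 0 = x n)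
    (hXsol : ∀ n : ℕ, 1 ≤ n → ∀ t : ℝ, 0 ≤ t →
      HasDerivAt (X n)
        (k (n-1) * (X (n-1) t) ^ 2 - k n * X n t * X (n+1) t) t)
    (T : ℝ) (hT : 0 ≤ T)
    {γ C : ℝ} (hγ : 0 ≤ γ) (hC : 0 ≤ C)
    (hcube : ∀ m : ℕ, 1 ≤ m → ∫ s in (0:ℝ)..T, k m * X m s ^ 3 ≤ C * (2:ℝ) ^ (γ * (m:ℝ))) :
    ∀ n : ℕ, 1 ≤ n → ∫ s in (0:ℝ)..T, k n * X n s ^ 3 ≤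
      ((∑' m, x m ^ 2) + (1 + (2:ℝ) ^ β) * ((1 + ∑' m, x m ^ 2) * (1 + C) * (2:ℝ) ^ (2*γ)))
        * (2:ℝ) ^ ((γ/2 + 1/4) * (n:ℝ)) := by
  intro n hn
  have hCA := aux_contAt hX0 hXsol
  have hXnn := aux_nonneg hβ hk0 hk hxnn hX0 hXinit hXsol
  have hknn := aux_k_nonneg hβ hk0 hk
  have hkm := aux_k_mono hβ hk0 hk
  set M := ∑' m, x m ^ 2 with hMdef
  have hMnn : 0 ≤ M := tsum_nonneg fun i => sq_nonneg _
  set E := (1 + M) * (1 + C) * (2:ℝ) ^ (2*γ) with hEdef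
  have hEnn : 0 ≤ E := by positivity
  set R := (2:ℝ) ^ ((γ/2 + 1/4) * (n:ℝ)) with hRdef
  have hRpos : 0 < R := Real.rpow_pos_of_pos (by norm_num) _
  have hR1 : 1 ≤ R := Real.one_le_rpow (by norm_num) (by positivity)
  set I3 := ∫ s in (0:ℝ)..T, k n * X n s * X (n+1) s ^ 2 with hI3def
  set I4 := ∫ s in (0:ℝ)..T, k (n+1) * (X n s * X (n+1) s * X (n+2) s) with hI4def
  set I4' := ∫ s in (0:ℝ)..T, k n * (X n s * X (n+1) s * X (n+2) s) with hI4'def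
  set Q := ∫ s in (0:ℝ)..T, k n * X n s ^ 2 * X (n+1) s with hQdef
  set W := ∫ s in (0:ℝ)..T, k n * X (n+1) s * X (n+2) s ^ 2 with hWdef
  set U1 := ∫ s in (0:ℝ)..T, k n * X (n+1) s ^ 3 with hU1def
  set U2 := ∫ s in (0:ℝ)..T, k n * X (n+2) s ^ 3 with hU2def
  have hid := aux_cube_id hβ hk0 hk hxnn hxl2 hX0 hXinit hXsol T hT n hn
  have hQle : Q ≤ (n:ℝ) * (M/2) := aux_flux hβ hk0 hk hxnn hxl2 hX0 hXinit hXsol T hT n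
  have hQnn : 0 ≤ Q := intervalIntegral.integral_nonneg hT (fun s hs => by
    have := hknn n; have := hXnn (n+1) s hs.1; positivity)
  have hWnn : 0 ≤ W := intervalIntegral.integral_nonneg hT (fun s hs => by
    have := hknn n; have := hXnn (n+1) s hs.1; positivity)
  have hI3nn : 0 ≤ I3 := intervalIntegral.integral_nonneg hT (fun s hs => by
    have := hknn n; have := hXnn n s hs.1; positivity)
  have hI4'nn : 0 ≤ I4' := intervalIntegral.integral_nonneg hT (fun s hs => by
    have := hknn n
    have := hXnn n s hs.1; have := hXnn (n+1) s hs.1; have := hXnn (n+2) s hs.1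
    positivity)
  have hU1nn : 0 ≤ U1 := intervalIntegral.integral_nonneg hT (fun s hs => by
    have := hknn n; have := hXnn (n+1) s hs.1; positivity)
  have hU2nn : 0 ≤ U2 := intervalIntegral.integral_nonneg hT (fun s hs => by
    have := hknn n; have := hXnn (n+2) s hs.1; positivity)
  have hksucc : k (n+1) = (2:ℝ) ^ β * k n := by
    rw [hk (n+1) (by omega), hk n hn, ← Real.rpow_add (by norm_num : (0:ℝ) < 2)]
    congr 1
    push_cast
    ring
  have hI4eq : I4 = (2:ℝ) ^ β * I4' := by
    rw [hI4def, hI4'def, ← intervalIntegral.integral_const_mul]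
    apply intervalIntegral.integral_congr
    intro s _
    show k (n+1) * (X n s * X (n+1) s * X (n+2) s) = _
    rw [hksucc]
    ring
  have hcs1 : I3 ^ 2 ≤ Q * U1 :=
    aux_CS_PQG hT (hknn n) (hCA n) (hCA (n+1)) (fun t ht => hXnn (n+1) t ht)
  have hcs2 : I4' ^ 2 ≤ Q * W :=
    aux_CS_3 hT (hknn n) (hCA n) (hCA (n+1)) (hCA (n+2)) (fun t ht => hXnn (n+1) t ht)
  have hW3 : W ^ 3 ≤ U1 * U2 ^ 2 :=
    aux_holder3 hT (hknn n) (hCA (n+1)) (hCA (n+2)) (hXnn (n+1)) (hXnn (n+2))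
  -- shifted cube bounds
  have hsh1 : U1 ≤ C * (2:ℝ) ^ (γ * ((n:ℝ)+1)) := by
    have hca1 : CAo (fun s => k n * X (n+1) s ^ 3) := fun t ht =>
      continuousAt_const.mul ((hCA (n+1) t ht).pow 3)
    have hca2 : CAo (fun s => k (n+1) * X (n+1) s ^ 3) := fun t ht =>
      continuousAt_const.mul ((hCA (n+1) t ht).pow 3)
    have hstep : U1 ≤ ∫ s in (0:ℝ)..T, k (n+1) * X (n+1) s ^ 3 := by
      apply intervalIntegral.integral_mono_on hT (hca1.intInt hT) (hca2.intInt hT)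
      intro s hs
      exact mul_le_mul_of_nonneg_right (hkm n) (pow_nonneg (hXnn (n+1) s hs.1) 3)
    have h2 := hcube (n+1) (by omega)
    have hcast : ((n+1 : ℕ) : ℝ) = (n:ℝ) + 1 := by push_cast; ring
    rw [hcast] at h2
    exact le_trans hstep h2
  have hsh2 : U2 ≤ C * (2:ℝ) ^ (γ * ((n:ℝ)+2)) := by
    have hca1 : CAo (fun s => k n * X (n+2) s ^ 3) := fun t ht =>
      continuousAt_const.mul ((hCA (n+2) t ht).pow 3)
    have hca2 : CAo (fun s => k (n+2) * X (n+2) s ^ 3) := fun t ht =>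
      continuousAt_const.mul ((hCA (n+2) t ht).pow 3)
    have hstep : U2 ≤ ∫ s in (0:ℝ)..T, k (n+2) * X (n+2) s ^ 3 := by
      apply intervalIntegral.integral_mono_on hT (hca1.intInt hT) (hca2.intInt hT)
      intro s hs
      exact mul_le_mul_of_nonneg_right (le_trans (hkm n) (hkm (n+1)))
        (pow_nonneg (hXnn (n+2) s hs.1) 3)
    have h2 := hcube (n+2) (by omega)
    have hcast : ((n+2 : ℕ) : ℝ) = (n:ℝ) + 2 := by push_cast; ring
    rw [hcast] at h2
    exact le_trans hstep h2
  -- W ≤ C * 2^(γ(n+2))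
  have hWle : W ≤ C * (2:ℝ) ^ (γ * ((n:ℝ)+2)) := by
    apply le_of_pow_le_pow_left₀ (n := 3) (by norm_num) (by positivity)
    have h1 : U1 * U2 ^ 2 ≤ (C * (2:ℝ) ^ (γ * ((n:ℝ)+1))) * (C * (2:ℝ) ^ (γ * ((n:ℝ)+2))) ^ 2 := by
      apply mul_le_mul hsh1 (pow_le_pow_left₀ hU2nn hsh2 2) (by positivity) (by positivity)
    have hexp : (2:ℝ) ^ (γ * ((n:ℝ)+1)) ≤ (2:ℝ) ^ (γ * ((n:ℝ)+2)) :=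
      Real.rpow_le_rpow_of_exponent_le (by norm_num)
        (mul_le_mul_of_nonneg_left (by linarith) hγ)
    have h2 : (C * (2:ℝ) ^ (γ * ((n:ℝ)+1))) * (C * (2:ℝ) ^ (γ * ((n:ℝ)+2))) ^ 2
        ≤ (C * (2:ℝ) ^ (γ * ((n:ℝ)+2))) ^ 3 := by
      have hnn2 : (0:ℝ) ≤ (C * (2:ℝ) ^ (γ * ((n:ℝ)+2))) ^ 2 := sq_nonneg _
      calc (C * (2:ℝ) ^ (γ * ((n:ℝ)+1))) * (C * (2:ℝ) ^ (γ * ((n:ℝ)+2))) ^ 2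
          ≤ (C * (2:ℝ) ^ (γ * ((n:ℝ)+2))) * (C * (2:ℝ) ^ (γ * ((n:ℝ)+2))) ^ 2 := by
            apply mul_le_mul_of_nonneg_right _ hnn2
            exact mul_le_mul_of_nonneg_left hexp hC
        _ = (C * (2:ℝ) ^ (γ * ((n:ℝ)+2))) ^ 3 := by ring
    calc W ^ 3 ≤ U1 * U2 ^ 2 := hW3
      _ ≤ _ := le_trans h1 h2
  -- key numeric bound
  have hkey : ∀ z : ℝ, z ≤ γ * ((n:ℝ)+2) →
      (n:ℝ) * (M/2) * (C * (2:ℝ) ^ z) ≤ (E * R) ^ 2 := by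
    intro z hz
    set p := (2:ℝ) ^ (γ * (n:ℝ)) with hpdef
    set q := (2:ℝ) ^ ((n:ℝ)/2) with hqdef
    set r := (2:ℝ) ^ (2*γ) with hrdef
    have hppos : 0 < p := Real.rpow_pos_of_pos (by norm_num) _
    have hqpos : 0 < q := Real.rpow_pos_of_pos (by norm_num) _
    have hr1 : 1 ≤ r := Real.one_le_rpow (by norm_num) (by positivity)
    have h1 : (2:ℝ) ^ z ≤ p * r := by
      rw [hpdef, hrdef, ← Real.rpow_add (by norm_num : (0:ℝ) < 2)]
      exact Real.rpow_le_rpow_of_exponent_le (by norm_num)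
        (by linarith [hz, show γ*((n:ℝ)+2) = γ*(n:ℝ)+2*γ from by ring])
    have hRR : R * R = p * q := by
      rw [hRdef, hpdef, hqdef, ← Real.rpow_add (by norm_num : (0:ℝ) < 2),
        ← Real.rpow_add (by norm_num : (0:ℝ) < 2)]
      congr 1
      ring
    have hnle : (n:ℝ) ≤ 4 * q := by
      rw [hqdef]
      exact aux_nat_le n
    have hmid : 2 * M * C * r ≤ (1+M)^2 * (1+C)^2 * (r*r) := by
      have h2M : 2 * M ≤ (1+M)^2 := aux_two_mul_le M
      have hCc : C ≤ (1+C)^2 := aux_le_one_add_sq C hC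
      have hbig : 2 * M * C ≤ (1+M)^2 * (1+C)^2 := by
        have h0 : (2*M)*C ≤ (1+M)^2 * (1+C)^2 :=
          mul_le_mul h2M hCc hC (by positivity)
        linarith [h0]
      calc 2 * M * C * r ≤ (1+M)^2 * (1+C)^2 * r :=
            mul_le_mul_of_nonneg_right hbig (by linarith)
        _ ≤ (1+M)^2 * (1+C)^2 * (r*r) := by
            apply mul_le_mul_of_nonneg_left _ (by positivity)
            exact le_mul_of_one_le_left (by linarith) hr1
    calc (n:ℝ) * (M/2) * (C * (2:ℝ) ^ z)
        ≤ (4*q) * (M/2) * (C * (2:ℝ) ^ z) := by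
          apply mul_le_mul_of_nonneg_right _ (by positivity)
          exact mul_le_mul_of_nonneg_right hnle (by positivity)
      _ ≤ (4*q) * (M/2) * (C * (p*r)) := by
          apply mul_le_mul_of_nonneg_left _ (by positivity)
          exact mul_le_mul_of_nonneg_left h1 hC
      _ = (2 * M * C * r) * (p * q) := by ring
      _ ≤ ((1+M)^2 * (1+C)^2 * (r*r)) * (p * q) :=
          mul_le_mul_of_nonneg_right hmid (by positivity)
      _ = (E * R) ^ 2 := by
          rw [hEdef, show ((1+M)*(1+C)*r*R)^2
            = ((1+M)^2*(1+C)^2*(r*r))*(R*R) from by ring, hRR]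
  -- I3 and I4' bounds
  have hI3le : I3 ≤ E * R := by
    apply le_of_pow_le_pow_left₀ (n := 2) (by norm_num) (by positivity)
    calc I3 ^ 2 ≤ Q * U1 := hcs1
      _ ≤ ((n:ℝ) * (M/2)) * (C * (2:ℝ) ^ (γ * ((n:ℝ)+1))) :=
          mul_le_mul hQle hsh1 hU1nn (by positivity)
      _ = (n:ℝ) * (M/2) * (C * (2:ℝ) ^ (γ * ((n:ℝ)+1))) := by ring
      _ ≤ (E * R) ^ 2 := hkey _
          (mul_le_mul_of_nonneg_left (by linarith) hγ)
  have hI4'le : I4' ≤ E * R := by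
    apply le_of_pow_le_pow_left₀ (n := 2) (by norm_num) (by positivity)
    calc I4' ^ 2 ≤ Q * W := hcs2
      _ ≤ ((n:ℝ) * (M/2)) * (C * (2:ℝ) ^ (γ * ((n:ℝ)+2))) :=
          mul_le_mul hQle hWle hWnn (by positivity)
      _ = (n:ℝ) * (M/2) * (C * (2:ℝ) ^ (γ * ((n:ℝ)+2))) := by ring
      _ ≤ (E * R) ^ 2 := hkey _ le_rfl
  -- assemble
  have h2bnn : (0:ℝ) ≤ (2:ℝ) ^ β := Real.rpow_nonneg (by norm_num) _
  have hMR : M ≤ M * R := le_mul_of_one_le_right hMnn hR1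
  have hI4le : I4 ≤ (2:ℝ)^β * (E * R) := by
    rw [hI4eq]
    exact mul_le_mul_of_nonneg_left hI4'le h2bnn
  calc ∫ s in (0:ℝ)..T, k n * X n s ^ 3 ≤ M + (I3 + I4) := hid
    _ ≤ M * R + (E * R + (2:ℝ)^β * (E * R)) := by linarith
    _ = (M + (1 + (2:ℝ)^β) * ((1 + M) * (1 + C) * (2:ℝ) ^ (2*γ))) * R := by
        rw [hEdef]
        ring
end OneSol3

section OneSol4
variable {β : ℝ} {k : ℕ → ℝ} {x : ℕ → ℝ} {X : ℕ → ℝ → ℝ}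

private lemma aux_boot (hβ : 0 < β) (hk0 : k 0 = 0)
    (hk : ∀ n : ℕ, 1 ≤ n → k n = (2:ℝ) ^ (β * (n:ℝ)))
    (hxnn : ∀ n : ℕ, 0 ≤ x n) (hxl2 : Summable (fun n : ℕ => (x n) ^ 2))
    (hX0 : ∀ t : ℝ, X 0 t = 0) (hXinit : ∀ n : ℕ, X n 0 = x n)
    (hXsol : ∀ n : ℕ, 1 ≤ n → ∀ t : ℝ, 0 ≤ t →
      HasDerivAt (X n)
        (k (n-1) * (X (n-1) t) ^ 2 - k n * X n t * X (n+1) t) t)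
    (T : ℝ) (hT : 0 ≤ T) :
    ∃ C : ℝ, 0 ≤ C ∧ ∀ n : ℕ, 1 ≤ n →
      ∫ s in (0:ℝ)..T, k n * X n s ^ 3 ≤ C * (2:ℝ) ^ ((3/4 : ℝ) * (n:ℝ)) := by
  have main : ∀ j : ℕ, ∃ γ C : ℝ, 0 ≤ γ ∧ γ ≤ β / 2^j + 1/2 ∧ 0 ≤ C ∧
      ∀ n : ℕ, 1 ≤ n → ∫ s in (0:ℝ)..T, k n * X n s ^ 3 ≤ C * (2:ℝ) ^ (γ * (n:ℝ)) := by
    intro j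
    induction j with
    | zero =>
      refine ⟨β, Real.sqrt (∑' m, x m ^ 2) ^ 3 * T, hβ.le, by norm_num, by positivity, ?_⟩
      exact aux_cube_triv hβ hk0 hk hxnn hxl2 hX0 hXinit hXsol T hT
    | succ j ih =>
      obtain ⟨γ, C, h1, h2, h3, h4⟩ := ih
      refine ⟨γ/2 + 1/4,
        (∑' m, x m ^ 2) + (1 + (2:ℝ) ^ β) * ((1 + ∑' m, x m ^ 2) * (1 + C) * (2:ℝ) ^ (2*γ)),
        by linarith, ?_, ?_, ?_⟩
      · have : β / 2^(j+1) + 1/2 = (β / 2^j + 1/2)/2 + 1/4 := by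
          rw [pow_succ]
          ring
        rw [this]
        linarith
      · have hMnn : (0:ℝ) ≤ ∑' m, x m ^ 2 := tsum_nonneg fun i => sq_nonneg _
        positivity
      · exact aux_pass hβ hk0 hk hxnn hxl2 hX0 hXinit hXsol T hT h1 h3 h4
  obtain ⟨j, hj⟩ : ∃ j : ℕ, 4 * β < 2^j := pow_unbounded_of_one_lt (4*β) (by norm_num)
  obtain ⟨γ, C, h1, h2, h3, h4⟩ := main j
  refine ⟨C, h3, fun n hn => le_trans (h4 n hn) ?_⟩
  have hjpos : (0:ℝ) < 2^j := by positivity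
  have hγ34 : γ ≤ 3/4 := by
    have : β / 2^j ≤ 1/4 := by
      rw [div_le_iff₀ hjpos]
      linarith
    linarith
  apply mul_le_mul_of_nonneg_left _ h3
  apply Real.rpow_le_rpow_of_exponent_le (by norm_num)
  exact mul_le_mul_of_nonneg_right hγ34 (Nat.cast_nonneg n)

end OneSol4

section TwoSol
variable {β : ℝ} {k : ℕ → ℝ} {x : ℕ → ℝ} {X Y : ℕ → ℝ → ℝ}

private lemma aux_CAo_sum {F : ℕ → ℝ → ℝ} (h : ∀ m, CAo (F m)) (N : ℕ) :
    CAo (fun s => ∑ m ∈ Finset.range N, F m s) := by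
  induction N with
  | zero => intro t ht; simp only [Finset.range_zero, Finset.sum_empty]; exact continuousAt_const
  | succ N ih =>
    intro t ht
    have : (fun s => ∑ m ∈ Finset.range (N+1), F m s)
        = fun s => (∑ m ∈ Finset.range N, F m s) + F N s := by
      funext s; rw [Finset.sum_range_succ]
    rw [this]
    exact (ih t ht).add (h N t ht)

private lemma aux_phi_deriv (hk0 : k 0 = 0)
    (hX0 : ∀ t : ℝ, X 0 t = 0) (hY0 : ∀ t : ℝ, Y 0 t = 0)
    (hXsol : ∀ n : ℕ, 1 ≤ n → ∀ t : ℝ, 0 ≤ t →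
      HasDerivAt (X n)
        (k (n-1) * (X (n-1) t) ^ 2 - k n * X n t * X (n+1) t) t)
    (hYsol : ∀ n : ℕ, 1 ≤ n → ∀ t : ℝ, 0 ≤ t →
      HasDerivAt (Y n)
        (k (n-1) * (Y (n-1) t) ^ 2 - k n * Y n t * Y (n+1) t) t) :
    ∀ N : ℕ, ∀ t : ℝ, 0 ≤ t →
      HasDerivAt (fun s => ∑ m ∈ Finset.range (N+1), (2:ℝ)⁻¹ ^ m * (X m s - Y m s) ^ 2)
        (-((2:ℝ)⁻¹ ^ N * (k N * ((X N t + Y N t) * ((X N t - Y N t) * (X (N+1) t - Y (N+1) t)))))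
          - ∑ m ∈ Finset.range (N+1),
              (2:ℝ)⁻¹ ^ m * (k m * ((X (m+1) t + Y (m+1) t) * (X m t - Y m t) ^ 2))) t := by
  intro N
  induction N with
  | zero =>
    intro t ht
    have hfun : (fun s => ∑ m ∈ Finset.range 1, (2:ℝ)⁻¹ ^ m * (X m s - Y m s) ^ 2)
        = fun _ => (0:ℝ) := by
      funext s; simp [hX0, hY0]
    rw [hfun]
    have hv : (-((2:ℝ)⁻¹ ^ 0 * (k 0 * ((X 0 t + Y 0 t) * ((X 0 t - Y 0 t) * (X 1 t - Y 1 t)))))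
        - ∑ m ∈ Finset.range 1,
            (2:ℝ)⁻¹ ^ m * (k m * ((X (m+1) t + Y (m+1) t) * (X m t - Y m t) ^ 2))) = 0 := by
      simp [hk0]
    rw [hv]
    exact hasDerivAt_const t 0
  | succ N ih =>
    intro t ht
    have hfun : (fun s => ∑ m ∈ Finset.range (N+1+1), (2:ℝ)⁻¹ ^ m * (X m s - Y m s) ^ 2)
        = fun s => (∑ m ∈ Finset.range (N+1), (2:ℝ)⁻¹ ^ m * (X m s - Y m s) ^ 2)
            + (2:ℝ)⁻¹ ^ (N+1) * (X (N+1) s - Y (N+1) s) ^ 2 := by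
      funext s; rw [Finset.sum_range_succ]
    rw [hfun]
    have hz := ((hXsol (N+1) (Nat.le_add_left 1 N) t ht).sub
      (hYsol (N+1) (Nat.le_add_left 1 N) t ht)).pow 2
    have hzc := hz.const_mul ((2:ℝ)⁻¹ ^ (N+1))
    have h3 := (ih t ht).add hzc
    refine h3.congr_deriv (Eq.symm ?_)
    rw [Finset.sum_range_succ]
    simp only [Nat.add_sub_cancel, pow_one, pow_succ, Pi.sub_apply]
    push_cast
    ring
private lemma aux_ptwise (a b c d K : ℝ) (ha : 0 ≤ a) (hb : 0 ≤ b) (hc : 0 ≤ c) (hd : 0 ≤ d)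
    (hK : 0 ≤ K) :
    K * ((a+b)^2*(c+d)) ≤ 2*(K*a^2*c) + 2*(K*b^2*d)
      + (4/3)*(K*a^3) + (4/3)*(K*b^3) + (2/3)*(K*c^3) + (2/3)*(K*d^3) := by
  have h1 : (a+b)^2*(c+d) ≤ 2*a^2*c + 2*b^2*d + (4/3)*a^3+(4/3)*b^3+(2/3)*c^3+(2/3)*d^3 := by
    nlinarith [mul_nonneg (sq_nonneg (a-d)) (by linarith : (0:ℝ) ≤ 2*a+d),
      mul_nonneg (sq_nonneg (b-c)) (by linarith : (0:ℝ) ≤ 2*b+c),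
      mul_nonneg (sq_nonneg (a-b)) (by linarith : (0:ℝ) ≤ c+d)]
  calc K * ((a+b)^2*(c+d))
      ≤ K * (2*a^2*c + 2*b^2*d + (4/3)*a^3+(4/3)*b^3+(2/3)*c^3+(2/3)*d^3) :=
        mul_le_mul_of_nonneg_left h1 hK
    _ = 2*(K*a^2*c) + 2*(K*b^2*d)
        + (4/3)*(K*a^3) + (4/3)*(K*b^3) + (2/3)*(K*c^3) + (2/3)*(K*d^3) := by ring

private lemma aux_phi_bound (hβ : 0 < β) (hk0 : k 0 = 0)
    (hk : ∀ n : ℕ, 1 ≤ n → k n = (2:ℝ) ^ (β * (n:ℝ)))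
    (hxnn : ∀ n : ℕ, 0 ≤ x n)
    (hX0 : ∀ t : ℝ, X 0 t = 0) (hY0 : ∀ t : ℝ, Y 0 t = 0)
    (hXinit : ∀ n : ℕ, X n 0 = x n) (hYinit : ∀ n : ℕ, Y n 0 = x n)
    (hXsol : ∀ n : ℕ, 1 ≤ n → ∀ t : ℝ, 0 ≤ t →
      HasDerivAt (X n)
        (k (n-1) * (X (n-1) t) ^ 2 - k n * X n t * X (n+1) t) t)
    (hYsol : ∀ n : ℕ, 1 ≤ n → ∀ t : ℝ, 0 ≤ t →
      HasDerivAt (Y n)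
        (k (n-1) * (Y (n-1) t) ^ 2 - k n * Y n t * Y (n+1) t) t)
    (t : ℝ) (ht : 0 ≤ t) (N : ℕ) :
    ∑ m ∈ Finset.range (N+1), (2:ℝ)⁻¹ ^ m * (X m t - Y m t) ^ 2 ≤
      ∫ s in (0:ℝ)..t, (2:ℝ)⁻¹ ^ N *
        (k N * ((X N s + Y N s) ^ 2 * (X (N+1) s + Y (N+1) s))) := by
  have hCAX := aux_contAt hX0 hXsol
  have hCAY := aux_contAt hY0 hYsol
  have hXnn := aux_nonneg hβ hk0 hk hxnn hX0 hXinit hXsol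
  have hYnn := aux_nonneg hβ hk0 hk hxnn hY0 hYinit hYsol
  have hknn := aux_k_nonneg hβ hk0 hk
  set c : ℝ → ℝ := fun s =>
    (2:ℝ)⁻¹ ^ N * (k N * ((X N s + Y N s) * ((X N s - Y N s) * (X (N+1) s - Y (N+1) s)))) with hc
  set S : ℝ → ℝ := fun s => ∑ m ∈ Finset.range (N+1),
    (2:ℝ)⁻¹ ^ m * (k m * ((X (m+1) s + Y (m+1) s) * (X m s - Y m s) ^ 2)) with hS
  have hCAc : CAo c := fun u hu =>
    continuousAt_const.mul (continuousAt_const.mul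
      (((hCAX N u hu).add (hCAY N u hu)).mul
        (((hCAX N u hu).sub (hCAY N u hu)).mul
          ((hCAX (N+1) u hu).sub (hCAY (N+1) u hu)))))
  have hCAS : CAo S := aux_CAo_sum (fun m u hu =>
    continuousAt_const.mul (continuousAt_const.mul
      (((hCAX (m+1) u hu).add (hCAY (m+1) u hu)).mul
        (((hCAX m u hu).sub (hCAY m u hu)).pow 2)))) (N+1)
  have hCAcS : CAo (fun s => -c s - S s) := fun u hu => ((hCAc u hu).neg).sub (hCAS u hu)
  have hd : ∀ s : ℝ, 0 ≤ s →
      HasDerivAt (fun u => ∑ m ∈ Finset.range (N+1), (2:ℝ)⁻¹ ^ m * (X m u - Y m u) ^ 2)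
        (-c s - S s) s := by
    intro s hs
    have h := aux_phi_deriv hk0 hX0 hY0 hXsol hYsol N s hs
    simp only [hc, hS]
    exact h
  have hftc := aux_ftc ht hd (hCAcS.intInt ht)
  have hphi0 : ∑ m ∈ Finset.range (N+1), (2:ℝ)⁻¹ ^ m * (X m 0 - Y m 0) ^ 2 = 0 :=
    Finset.sum_eq_zero (fun m _ => by rw [hXinit, hYinit]; ring)
  have hsplit : (∫ s in (0:ℝ)..t, (-c s - S s))
      = (∫ s in (0:ℝ)..t, -c s) - ∫ s in (0:ℝ)..t, S s :=
    intervalIntegral.integral_sub ((hCAc.intInt ht).neg) (hCAS.intInt ht)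
  have hSnn : (0:ℝ) ≤ ∫ s in (0:ℝ)..t, S s := by
    apply intervalIntegral.integral_nonneg ht
    intro s hs
    apply Finset.sum_nonneg
    intro m _
    have h1 := hXnn (m+1) s hs.1
    have h2 := hYnn (m+1) s hs.1
    have h3 := hknn m
    positivity
  have hptw : ∀ s ∈ Icc (0:ℝ) t, -c s ≤ (2:ℝ)⁻¹ ^ N *
      (k N * ((X N s + Y N s) ^ 2 * (X (N+1) s + Y (N+1) s))) := by
    intro s hs
    have hX1 := hXnn N s hs.1
    have hY1 := hYnn N s hs.1
    have hX2 := hXnn (N+1) s hs.1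
    have hY2 := hYnn (N+1) s hs.1
    have hkN := hknn N
    have key : -((X N s - Y N s) * (X (N+1) s - Y (N+1) s)) ≤
        (X N s + Y N s) * (X (N+1) s + Y (N+1) s) := by
      nlinarith [mul_nonneg hX1 hX2, mul_nonneg hY1 hY2, mul_nonneg hX1 hY2,
        mul_nonneg hY1 hX2]
    have hA : (0:ℝ) ≤ (2:ℝ)⁻¹ ^ N * k N * (X N s + Y N s) := by positivity
    have e1 : -c s = ((2:ℝ)⁻¹ ^ N * k N * (X N s + Y N s)) *
        (-((X N s - Y N s) * (X (N+1) s - Y (N+1) s))) := by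
      simp only [hc]; ring
    have e2 : (2:ℝ)⁻¹ ^ N * (k N * ((X N s + Y N s) ^ 2 * (X (N+1) s + Y (N+1) s)))
        = ((2:ℝ)⁻¹ ^ N * k N * (X N s + Y N s)) *
          ((X N s + Y N s) * (X (N+1) s + Y (N+1) s)) := by ring
    rw [e1, e2]
    exact mul_le_mul_of_nonneg_left key hA
  have hCAb : CAo (fun s => (2:ℝ)⁻¹ ^ N *
      (k N * ((X N s + Y N s) ^ 2 * (X (N+1) s + Y (N+1) s)))) := fun u hu =>
    continuousAt_const.mul (continuousAt_const.mul
      ((((hCAX N u hu).add (hCAY N u hu)).pow 2).mul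
        ((hCAX (N+1) u hu).add (hCAY (N+1) u hu))))
  have hbnd : (∫ s in (0:ℝ)..t, -c s) ≤ ∫ s in (0:ℝ)..t, (2:ℝ)⁻¹ ^ N *
      (k N * ((X N s + Y N s) ^ 2 * (X (N+1) s + Y (N+1) s))) :=
    intervalIntegral.integral_mono_on ht ((hCAc.intInt ht).neg) (hCAb.intInt ht) hptw
  have hphit := hftc
  rw [hphi0, sub_zero, hsplit] at hphit
  linarith [hSnn, hbnd, hphit]

end TwoSol

set_option maxHeartbeats 1000000

/-- Uniqueness for the dyadic model with non-negative ℓ² initial condition: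
any two weak solutions with the same data coincide for all `t ≥ 0`. -/
theorem dyadic_uniqueness
    (β : ℝ) (hβ : 0 < β) (k : ℕ → ℝ)
    (hk0 : k 0 = 0) (hk : ∀ n : ℕ, 1 ≤ n → k n = (2:ℝ) ^ (β * (n:ℝ)))
    (x : ℕ → ℝ) (hx0 : x 0 = 0) (hxnn : ∀ n : ℕ, 0 ≤ x n)
    (hxl2 : Summable (fun n : ℕ => (x n) ^ 2))
    (X Y : ℕ → ℝ → ℝ)
    (hX0 : ∀ t : ℝ, X 0 t = 0) (hY0 : ∀ t : ℝ, Y 0 t = 0)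
    (hXinit : ∀ n : ℕ, X n 0 = x n) (hYinit : ∀ n : ℕ, Y n 0 = x n)
    (hXsol : ∀ n : ℕ, 1 ≤ n → ∀ t : ℝ, 0 ≤ t →
      HasDerivAt (X n)
        (k (n-1) * (X (n-1) t) ^ 2 - k n * X n t * X (n+1) t) t)
    (hYsol : ∀ n : ℕ, 1 ≤ n → ∀ t : ℝ, 0 ≤ t →
      HasDerivAt (Y n)
        (k (n-1) * (Y (n-1) t) ^ 2 - k n * Y n t * Y (n+1) t) t) :
    ∀ n : ℕ, ∀ t : ℝ, 0 ≤ t → X n t = Y n t := by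
  intro n t ht
  rcases Nat.eq_zero_or_pos n with rfl | hn
  · rw [hX0, hY0]
  have hCAX := aux_contAt hX0 hXsol
  have hCAY := aux_contAt hY0 hYsol
  have hXnn := aux_nonneg hβ hk0 hk hxnn hX0 hXinit hXsol
  have hYnn := aux_nonneg hβ hk0 hk hxnn hY0 hYinit hYsol
  have hknn := aux_k_nonneg hβ hk0 hk
  have hkm := aux_k_mono hβ hk0 hk
  set M := ∑' m, x m ^ 2 with hMdef
  have hMnn : 0 ≤ M := tsum_nonneg fun i => sq_nonneg _
  obtain ⟨CX, hCX0, hCX⟩ := aux_boot hβ hk0 hk hxnn hxl2 hX0 hXinit hXsol t ht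
  obtain ⟨CY, hCY0, hCY⟩ := aux_boot hβ hk0 hk hxnn hxl2 hY0 hYinit hYsol t ht
  have hfX := aux_flux hβ hk0 hk hxnn hxl2 hX0 hXinit hXsol t ht
  have hfY := aux_flux hβ hk0 hk hxnn hxl2 hY0 hYinit hYsol t ht
  set b : ℕ → ℝ := fun N => (2:ℝ)⁻¹ ^ N *
    (2*(N:ℝ)*M + 2*(CX+CY)*(2:ℝ)^((3/4:ℝ)*((N:ℝ)+1))) with hbdef
  -- step : the key estimate for every N ≥ n
  have hstep : ∀ N : ℕ, n ≤ N → (2:ℝ)⁻¹ ^ n * (X n t - Y n t) ^ 2 ≤ b N := by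
    intro N hN
    have hN1 : 1 ≤ N := le_trans hn hN
    have h1 : (2:ℝ)⁻¹ ^ n * (X n t - Y n t) ^ 2 ≤
        ∑ m ∈ Finset.range (N+1), (2:ℝ)⁻¹ ^ m * (X m t - Y m t) ^ 2 := by
      apply Finset.single_le_sum (f := fun m => (2:ℝ)⁻¹ ^ m * (X m t - Y m t) ^ 2)
      · intro i _
        positivity
      · exact Finset.mem_range.2 (by omega)
    have h2 := aux_phi_bound hβ hk0 hk hxnn hX0 hY0 hXinit hYinit hXsol hYsol t ht N
    -- pull out the weight
    have h3 : (∫ s in (0:ℝ)..t, (2:ℝ)⁻¹ ^ N *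
        (k N * ((X N s + Y N s) ^ 2 * (X (N+1) s + Y (N+1) s))))
        = (2:ℝ)⁻¹ ^ N * ∫ s in (0:ℝ)..t,
            k N * ((X N s + Y N s) ^ 2 * (X (N+1) s + Y (N+1) s)) :=
      intervalIntegral.integral_const_mul _ _
    -- continuity facts
    have hca1 : CAo (fun s => 2*(k N * X N s ^ 2 * X (N+1) s)) := fun u hu =>
      continuousAt_const.mul ((continuousAt_const.mul ((hCAX N u hu).pow 2)).mul
        (hCAX (N+1) u hu))
    have hca2 : CAo (fun s => 2*(k N * Y N s ^ 2 * Y (N+1) s)) := fun u hu =>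
      continuousAt_const.mul ((continuousAt_const.mul ((hCAY N u hu).pow 2)).mul
        (hCAY (N+1) u hu))
    have hca3 : CAo (fun s => (4/3)*(k N * X N s ^ 3)) := fun u hu =>
      continuousAt_const.mul (continuousAt_const.mul ((hCAX N u hu).pow 3))
    have hca4 : CAo (fun s => (4/3)*(k N * Y N s ^ 3)) := fun u hu =>
      continuousAt_const.mul (continuousAt_const.mul ((hCAY N u hu).pow 3))
    have hca5 : CAo (fun s => (2/3)*(k N * X (N+1) s ^ 3)) := fun u hu =>
      continuousAt_const.mul (continuousAt_const.mul ((hCAX (N+1) u hu).pow 3))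
    have hca6 : CAo (fun s => (2/3)*(k N * Y (N+1) s ^ 3)) := fun u hu =>
      continuousAt_const.mul (continuousAt_const.mul ((hCAY (N+1) u hu).pow 3))
    have hca12 : CAo (fun s => 2*(k N * X N s ^ 2 * X (N+1) s)
        + 2*(k N * Y N s ^ 2 * Y (N+1) s)) := fun u hu => (hca1 u hu).add (hca2 u hu)
    have hca123 : CAo (fun s => 2*(k N * X N s ^ 2 * X (N+1) s)
        + 2*(k N * Y N s ^ 2 * Y (N+1) s) + (4/3)*(k N * X N s ^ 3)) :=
      fun u hu => (hca12 u hu).add (hca3 u hu)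
    have hca1234 : CAo (fun s => 2*(k N * X N s ^ 2 * X (N+1) s)
        + 2*(k N * Y N s ^ 2 * Y (N+1) s) + (4/3)*(k N * X N s ^ 3)
        + (4/3)*(k N * Y N s ^ 3)) := fun u hu => (hca123 u hu).add (hca4 u hu)
    have hca12345 : CAo (fun s => 2*(k N * X N s ^ 2 * X (N+1) s)
        + 2*(k N * Y N s ^ 2 * Y (N+1) s) + (4/3)*(k N * X N s ^ 3)
        + (4/3)*(k N * Y N s ^ 3) + (2/3)*(k N * X (N+1) s ^ 3)) :=
      fun u hu => (hca1234 u hu).add (hca5 u hu)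
    have hcaJ : CAo (fun s => k N * ((X N s + Y N s) ^ 2 * (X (N+1) s + Y (N+1) s))) :=
      fun u hu => continuousAt_const.mul
        ((((hCAX N u hu).add (hCAY N u hu)).pow 2).mul
          ((hCAX (N+1) u hu).add (hCAY (N+1) u hu)))
    -- pointwise bound and splitting
    have h4 : (∫ s in (0:ℝ)..t, k N * ((X N s + Y N s) ^ 2 * (X (N+1) s + Y (N+1) s)))
        ≤ ∫ s in (0:ℝ)..t, (2*(k N * X N s ^ 2 * X (N+1) s)
            + 2*(k N * Y N s ^ 2 * Y (N+1) s) + (4/3)*(k N * X N s ^ 3)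
            + (4/3)*(k N * Y N s ^ 3) + (2/3)*(k N * X (N+1) s ^ 3)
            + (2/3)*(k N * Y (N+1) s ^ 3)) := by
      have hca123456 : CAo (fun s => 2*(k N * X N s ^ 2 * X (N+1) s)
          + 2*(k N * Y N s ^ 2 * Y (N+1) s) + (4/3)*(k N * X N s ^ 3)
          + (4/3)*(k N * Y N s ^ 3) + (2/3)*(k N * X (N+1) s ^ 3)
          + (2/3)*(k N * Y (N+1) s ^ 3)) := fun u hu => (hca12345 u hu).add (hca6 u hu)
      apply intervalIntegral.integral_mono_on ht (hcaJ.intInt ht) (hca123456.intInt ht)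
      intro s hs
      have := aux_ptwise (X N s) (Y N s) (X (N+1) s) (Y (N+1) s) (k N)
        (hXnn N s hs.1) (hYnn N s hs.1) (hXnn (N+1) s hs.1) (hYnn (N+1) s hs.1) (hknn N)
      linarith [this]
    have h5 : (∫ s in (0:ℝ)..t, (2*(k N * X N s ^ 2 * X (N+1) s)
            + 2*(k N * Y N s ^ 2 * Y (N+1) s) + (4/3)*(k N * X N s ^ 3)
            + (4/3)*(k N * Y N s ^ 3) + (2/3)*(k N * X (N+1) s ^ 3)
            + (2/3)*(k N * Y (N+1) s ^ 3)))
        = 2*(∫ s in (0:ℝ)..t, k N * X N s ^ 2 * X (N+1) s)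
          + 2*(∫ s in (0:ℝ)..t, k N * Y N s ^ 2 * Y (N+1) s)
          + (4/3)*(∫ s in (0:ℝ)..t, k N * X N s ^ 3)
          + (4/3)*(∫ s in (0:ℝ)..t, k N * Y N s ^ 3)
          + (2/3)*(∫ s in (0:ℝ)..t, k N * X (N+1) s ^ 3)
          + (2/3)*(∫ s in (0:ℝ)..t, k N * Y (N+1) s ^ 3) := by
      rw [intervalIntegral.integral_add (hca12345.intInt ht) (hca6.intInt ht),
        intervalIntegral.integral_add (hca1234.intInt ht) (hca5.intInt ht),
        intervalIntegral.integral_add (hca123.intInt ht) (hca4.intInt ht),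
        intervalIntegral.integral_add (hca12.intInt ht) (hca3.intInt ht),
        intervalIntegral.integral_add (hca1.intInt ht) (hca2.intInt ht)]
      have e1 : (∫ s in (0:ℝ)..t, (2:ℝ)*(k N * X N s ^ 2 * X (N+1) s))
          = 2*(∫ s in (0:ℝ)..t, k N * X N s ^ 2 * X (N+1) s) :=
        intervalIntegral.integral_const_mul _ _
      have e2 : (∫ s in (0:ℝ)..t, (2:ℝ)*(k N * Y N s ^ 2 * Y (N+1) s))
          = 2*(∫ s in (0:ℝ)..t, k N * Y N s ^ 2 * Y (N+1) s) :=
        intervalIntegral.integral_const_mul _ _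
      have e3 : (∫ s in (0:ℝ)..t, ((4:ℝ)/3)*(k N * X N s ^ 3))
          = (4/3)*(∫ s in (0:ℝ)..t, k N * X N s ^ 3) :=
        intervalIntegral.integral_const_mul _ _
      have e4 : (∫ s in (0:ℝ)..t, ((4:ℝ)/3)*(k N * Y N s ^ 3))
          = (4/3)*(∫ s in (0:ℝ)..t, k N * Y N s ^ 3) :=
        intervalIntegral.integral_const_mul _ _
      have e5 : (∫ s in (0:ℝ)..t, ((2:ℝ)/3)*(k N * X (N+1) s ^ 3))
          = (2/3)*(∫ s in (0:ℝ)..t, k N * X (N+1) s ^ 3) :=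
        intervalIntegral.integral_const_mul _ _
      have e6 : (∫ s in (0:ℝ)..t, ((2:ℝ)/3)*(k N * Y (N+1) s ^ 3))
          = (2/3)*(∫ s in (0:ℝ)..t, k N * Y (N+1) s ^ 3) :=
        intervalIntegral.integral_const_mul _ _
      rw [e1, e2, e3, e4, e5, e6]
    -- cube bounds including shifted ones
    have hcastN : ((N+1:ℕ):ℝ) = (N:ℝ)+1 := by push_cast; ring
    have hcubeX : (∫ s in (0:ℝ)..t, k N * X N s ^ 3) ≤ CX * (2:ℝ)^((3/4:ℝ)*(N:ℝ)) :=
      hCX N hN1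
    have hcubeY : (∫ s in (0:ℝ)..t, k N * Y N s ^ 3) ≤ CY * (2:ℝ)^((3/4:ℝ)*(N:ℝ)) :=
      hCY N hN1
    have hshX : (∫ s in (0:ℝ)..t, k N * X (N+1) s ^ 3)
        ≤ CX * (2:ℝ)^((3/4:ℝ)*((N:ℝ)+1)) := by
      have hmono : (∫ s in (0:ℝ)..t, k N * X (N+1) s ^ 3)
          ≤ ∫ s in (0:ℝ)..t, k (N+1) * X (N+1) s ^ 3 := by
        have hcaa : CAo (fun s => k N * X (N+1) s ^ 3) := fun u hu =>
          continuousAt_const.mul ((hCAX (N+1) u hu).pow 3)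
        have hcbb : CAo (fun s => k (N+1) * X (N+1) s ^ 3) := fun u hu =>
          continuousAt_const.mul ((hCAX (N+1) u hu).pow 3)
        apply intervalIntegral.integral_mono_on ht (hcaa.intInt ht) (hcbb.intInt ht)
        intro s hs
        exact mul_le_mul_of_nonneg_right (hkm N) (pow_nonneg (hXnn (N+1) s hs.1) 3)
      have h6 := hCX (N+1) (by omega)
      rw [hcastN] at h6
      exact le_trans hmono h6
    have hshY : (∫ s in (0:ℝ)..t, k N * Y (N+1) s ^ 3)
        ≤ CY * (2:ℝ)^((3/4:ℝ)*((N:ℝ)+1)) := by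
      have hmono : (∫ s in (0:ℝ)..t, k N * Y (N+1) s ^ 3)
          ≤ ∫ s in (0:ℝ)..t, k (N+1) * Y (N+1) s ^ 3 := by
        have hcaa : CAo (fun s => k N * Y (N+1) s ^ 3) := fun u hu =>
          continuousAt_const.mul ((hCAY (N+1) u hu).pow 3)
        have hcbb : CAo (fun s => k (N+1) * Y (N+1) s ^ 3) := fun u hu =>
          continuousAt_const.mul ((hCAY (N+1) u hu).pow 3)
        apply intervalIntegral.integral_mono_on ht (hcaa.intInt ht) (hcbb.intInt ht)
        intro s hs
        exact mul_le_mul_of_nonneg_right (hkm N) (pow_nonneg (hYnn (N+1) s hs.1) 3)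
      have h6 := hCY (N+1) (by omega)
      rw [hcastN] at h6
      exact le_trans hmono h6
    have hexp : (2:ℝ)^((3/4:ℝ)*(N:ℝ)) ≤ (2:ℝ)^((3/4:ℝ)*((N:ℝ)+1)) :=
      Real.rpow_le_rpow_of_exponent_le (by norm_num) (by nlinarith [Nat.cast_nonneg (α := ℝ) N])
    have hprodX : CX * (2:ℝ)^((3/4:ℝ)*(N:ℝ)) ≤ CX * (2:ℝ)^((3/4:ℝ)*((N:ℝ)+1)) :=
      mul_le_mul_of_nonneg_left hexp hCX0
    have hprodY : CY * (2:ℝ)^((3/4:ℝ)*(N:ℝ)) ≤ CY * (2:ℝ)^((3/4:ℝ)*((N:ℝ)+1)) :=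
      mul_le_mul_of_nonneg_left hexp hCY0
    have hJ : (∫ s in (0:ℝ)..t, k N * ((X N s + Y N s) ^ 2 * (X (N+1) s + Y (N+1) s)))
        ≤ 2*(N:ℝ)*M + 2*(CX+CY)*(2:ℝ)^((3/4:ℝ)*((N:ℝ)+1)) := by
      rw [h5] at h4
      have hfXN := hfX N
      have hfYN := hfY N
      linarith [h4, hcubeX, hcubeY, hshX, hshY, hprodX, hprodY, hfXN, hfYN]
    have hwnn : (0:ℝ) ≤ (2:ℝ)⁻¹ ^ N := by positivity
    calc (2:ℝ)⁻¹ ^ n * (X n t - Y n t) ^ 2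
        ≤ ∑ m ∈ Finset.range (N+1), (2:ℝ)⁻¹ ^ m * (X m t - Y m t) ^ 2 := h1
      _ ≤ ∫ s in (0:ℝ)..t, (2:ℝ)⁻¹ ^ N *
            (k N * ((X N s + Y N s) ^ 2 * (X (N+1) s + Y (N+1) s))) := h2
      _ = (2:ℝ)⁻¹ ^ N * ∫ s in (0:ℝ)..t,
            k N * ((X N s + Y N s) ^ 2 * (X (N+1) s + Y (N+1) s)) := h3
      _ ≤ (2:ℝ)⁻¹ ^ N * (2*(N:ℝ)*M + 2*(CX+CY)*(2:ℝ)^((3/4:ℝ)*((N:ℝ)+1))) :=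
          mul_le_mul_of_nonneg_left hJ hwnn
      _ = b N := by rw [hbdef]
  -- the bound sequence tends to zero
  have hbeq : ∀ N : ℕ, b N = 2*M * ((N:ℝ) * (1/2:ℝ)^N)
      + (2*(CX+CY)*(2:ℝ)^((3/4):ℝ)) * ((2:ℝ)^(-(1/4):ℝ))^N := by
    intro N
    have h1 : (2:ℝ)⁻¹ ^ N = (2:ℝ) ^ (-(N:ℝ)) := by
      rw [inv_pow, ← Real.rpow_natCast (2:ℝ) N, ← Real.rpow_neg (by norm_num)]
    have h2 : ((2:ℝ)^(-(1/4):ℝ))^N = (2:ℝ)^((-(1/4):ℝ)*(N:ℝ)) := by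
      rw [← Real.rpow_natCast ((2:ℝ)^(-(1/4):ℝ)) N, ← Real.rpow_mul (by norm_num)]
    have h3 : (1/2:ℝ)^N = (2:ℝ)⁻¹ ^ N := by norm_num
    have hz : (2:ℝ)^(-(N:ℝ)) * (2:ℝ)^((3/4:ℝ)*((N:ℝ)+1))
        = (2:ℝ)^((3/4):ℝ) * (2:ℝ)^((-(1/4):ℝ)*(N:ℝ)) := by
      rw [← Real.rpow_add (by norm_num), ← Real.rpow_add (by norm_num)]
      congr 1
      ring
    rw [hbdef]
    simp only [h3, h1, h2]
    linear_combination (2*(CX+CY)) * hz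
  have hl1 : Tendsto (fun N : ℕ => (N:ℝ) * (1/2:ℝ)^N) atTop (nhds 0) :=
    tendsto_self_mul_const_pow_of_lt_one (by norm_num) (by norm_num)
  have hr0 : (0:ℝ) ≤ (2:ℝ)^(-(1/4):ℝ) := Real.rpow_nonneg (by norm_num) _
  have hr1 : (2:ℝ)^(-(1/4):ℝ) < 1 :=
    Real.rpow_lt_one_of_one_lt_of_neg (by norm_num) (by norm_num)
  have hl2 : Tendsto (fun N : ℕ => ((2:ℝ)^(-(1/4):ℝ))^N) atTop (nhds 0) :=
    tendsto_pow_atTop_nhds_zero_of_lt_one hr0 hr1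
  have hlim : Tendsto b atTop (nhds 0) := by
    have hcomb := (hl1.const_mul (2*M)).add (hl2.const_mul (2*(CX+CY)*(2:ℝ)^((3/4):ℝ)))
    simp only [mul_zero, add_zero] at hcomb
    have hfun : b = fun N : ℕ => 2*M * ((N:ℝ) * (1/2:ℝ)^N)
        + (2*(CX+CY)*(2:ℝ)^((3/4):ℝ)) * ((2:ℝ)^(-(1/4):ℝ))^N := funext hbeq
    rw [hfun]
    exact hcomb
  have hev : ∀ᶠ N in atTop, (2:ℝ)⁻¹ ^ n * (X n t - Y n t) ^ 2 ≤ b N :=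
    eventually_atTop.2 ⟨n, hstep⟩
  have hle0 : (2:ℝ)⁻¹ ^ n * (X n t - Y n t) ^ 2 ≤ 0 := ge_of_tendsto hlim hev
  have hw : (0:ℝ) < (2:ℝ)⁻¹ ^ n := by positivity
  have hz2 : (X n t - Y n t) ^ 2 ≤ 0 := by
    nlinarith [sq_nonneg (X n t - Y n t)]
  have hz3 : (X n t - Y n t) ^ 2 = 0 := le_antisymm hz2 (sq_nonneg _)
  have hz4 : X n t - Y n t = 0 := by
    exact pow_eq_zero_iff (by norm_num) |>.1 hz3
  linarith [hz4]
end

section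
/- Let X and Y be two weak solutions of the dyadic model with the same non-negative ℓ² initial condition x, and set Z_n := Y_n - X_n, W_n := Y_n + X_n. Then Z satisfies Z_n' = k_{n-1} Z_{n-1} W_{n-1} - (k_n/2)(Z_n W_{n+1} + W_n Z_{n+1}) with Z_n(0) = 0, and for ψ_N(t) := Σ_{n=1}^N Z_n(t)²/2^n one has ψ_N'(t) ≤ 2^{-N} k_N (Y_N(t)³ + X_{N+1}(t)³ + X_N(t)³ + Y_{N+1}(t)³) for all t ≥ 0. -/
lemma cube_help (a b : ℝ) (ha : 0 ≤ a) (hb : 0 ≤ b) : a^2*b ≤ a^3 + b^3 := by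
  nlinarith [sq_nonneg (a-b), sq_nonneg (a+b), mul_nonneg ha hb]

/-- For two non-negative weak solutions `X`, `Y` with the same data, the
difference `Z = Y - X` solves the linearized system, and
`ψ_N(t) = ∑_{n=1}^N Z_n(t)²/2ⁿ` has derivative bounded by
`2^{-N} k_N (Y_N³ + X_{N+1}³ + X_N³ + Y_{N+1}³)`. -/
theorem dyadic_difference_energy_estimate
    (β : ℝ) (hβ : 0 < β) (k : ℕ → ℝ)
    (hk0 : k 0 = 0) (hk : ∀ n : ℕ, 1 ≤ n → k n = (2:ℝ) ^ (β * (n:ℝ)))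
    (x : ℕ → ℝ) (hx0 : x 0 = 0) (hxnn : ∀ n : ℕ, 0 ≤ x n)
    (hxl2 : Summable (fun n : ℕ => (x n) ^ 2))
    (X Y : ℕ → ℝ → ℝ)
    (hX0 : ∀ t : ℝ, X 0 t = 0) (hY0 : ∀ t : ℝ, Y 0 t = 0)
    (hXinit : ∀ n : ℕ, X n 0 = x n) (hYinit : ∀ n : ℕ, Y n 0 = x n)
    (hXsol : ∀ n : ℕ, 1 ≤ n → ∀ t : ℝ, 0 ≤ t →
      HasDerivAt (X n)
        (k (n-1) * (X (n-1) t) ^ 2 - k n * X n t * X (n+1) t) t)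
    (hYsol : ∀ n : ℕ, 1 ≤ n → ∀ t : ℝ, 0 ≤ t →
      HasDerivAt (Y n)
        (k (n-1) * (Y (n-1) t) ^ 2 - k n * Y n t * Y (n+1) t) t)
    (hXnn : ∀ n : ℕ, ∀ t : ℝ, 0 ≤ t → 0 ≤ X n t)
    (hYnn : ∀ n : ℕ, ∀ t : ℝ, 0 ≤ t → 0 ≤ Y n t)
    (Z W : ℕ → ℝ → ℝ)
    (hZ : ∀ n : ℕ, ∀ t : ℝ, Z n t = Y n t - X n t)
    (hW : ∀ n : ℕ, ∀ t : ℝ, W n t = Y n t + X n t) :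
    (∀ n : ℕ, 1 ≤ n → Z n 0 = 0) ∧
    (∀ n : ℕ, 1 ≤ n → ∀ t : ℝ, 0 ≤ t →
      HasDerivAt (Z n)
        (k (n-1) * Z (n-1) t * W (n-1) t
          - k n / 2 * (Z n t * W (n+1) t + W n t * Z (n+1) t)) t) ∧
    (∀ N : ℕ, 1 ≤ N → ∀ t : ℝ, 0 ≤ t →
      ∃ d : ℝ,
        HasDerivAt (fun s : ℝ => ∑ n ∈ Finset.Icc 1 N, (Z n s) ^ 2 / 2 ^ n) d t ∧
        d ≤ 2 ^ (-(N:ℤ)) * k N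
              * ((Y N t) ^ 3 + (X (N+1) t) ^ 3 + (X N t) ^ 3 + (Y (N+1) t) ^ 3)) := by
  have hZ0 : ∀ n : ℕ, 1 ≤ n → Z n 0 = 0 := by
    intro n _; rw [hZ, hXinit, hYinit, sub_self]
  have hknn : ∀ n : ℕ, 0 ≤ k n := by
    intro n
    rcases Nat.eq_zero_or_pos n with h | h
    · rw [h, hk0]
    · rw [hk n h]; positivity
  have hZder : ∀ n : ℕ, 1 ≤ n → ∀ t : ℝ, 0 ≤ t →
      HasDerivAt (Z n)
        (k (n-1) * Z (n-1) t * W (n-1) t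
          - k n / 2 * (Z n t * W (n+1) t + W n t * Z (n+1) t)) t := by
    intro n hn t ht
    have h := (hYsol n hn t ht).sub (hXsol n hn t ht)
    have hfun : (fun s => Y n s - X n s) = Z n := by
      funext s; rw [hZ]
    rw [show (Y n - X n) = (fun s => Y n s - X n s) from rfl, hfun] at h
    refine h.congr_deriv ?_
    rw [hZ (n-1) t, hZ n t, hZ (n+1) t, hW (n-1) t, hW n t, hW (n+1) t]
    ring
  refine ⟨hZ0, hZder, ?_⟩
  intro N hN t ht
  have hWnn : ∀ n : ℕ, 0 ≤ W n t := fun n => by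
    rw [hW]; exact add_nonneg (hYnn n t ht) (hXnn n t ht)
  set D : ℕ → ℝ := fun n =>
    k (n-1) * Z (n-1) t * W (n-1) t
      - k n / 2 * (Z n t * W (n+1) t + W n t * Z (n+1) t) with hD
  have hder : HasDerivAt (fun s : ℝ => ∑ n ∈ Finset.Icc 1 N, (Z n s) ^ 2 / 2 ^ n)
      (∑ n ∈ Finset.Icc 1 N, (2 * Z n t * D n) / 2 ^ n) t := by
    apply HasDerivAt.fun_sum
    intro n hn
    have hn1 : 1 ≤ n := (Finset.mem_Icc.mp hn).1
    have h := ((hZder n hn1 t ht).pow 2).div_const ((2:ℝ) ^ n)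
    refine h.congr_deriv ?_
    rw [hD]; push_cast; ring
  refine ⟨_, hder, ?_⟩
  -- key telescoping inequality
  have key : ∀ M : ℕ, 1 ≤ M →
      (∑ n ∈ Finset.Icc 1 M, (2 * Z n t * D n) / 2 ^ n)
        + k M * Z M t * W M t * Z (M+1) t / 2 ^ M ≤ 0 := by
    intro M hM
    induction M, hM using Nat.le_induction with
    | base =>
        simp only [Finset.Icc_self, Finset.sum_singleton, hD, hk0]
        have h2 : (0:ℝ) ≤ Z 1 t ^ 2 * W 2 t :=
          mul_nonneg (sq_nonneg _) (hWnn 2)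
        have hk1 : (0:ℝ) ≤ k 1 := hknn 1
        nlinarith [mul_nonneg hk1 h2]
    | succ M hM ih =>
        rw [Finset.sum_Icc_succ_top (by omega : 1 ≤ M + 1)]
        have hid :
            (∑ n ∈ Finset.Icc 1 M, (2 * Z n t * D n) / 2 ^ n)
              + (2 * Z (M+1) t * D (M+1)) / 2 ^ (M+1)
              + k (M+1) * Z (M+1) t * W (M+1) t * Z (M+2) t / 2 ^ (M+1)
            = ((∑ n ∈ Finset.Icc 1 M, (2 * Z n t * D n) / 2 ^ n)
                + k M * Z M t * W M t * Z (M+1) t / 2 ^ M)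
              - k (M+1) * Z (M+1) t ^ 2 * W (M+2) t / 2 ^ (M+1) := by
          rw [hD]
          simp only [Nat.add_sub_cancel]
          ring
        have hnn : (0:ℝ) ≤ k (M+1) * Z (M+1) t ^ 2 * W (M+2) t / 2 ^ (M+1) := by
          have := hknn (M+1); have := hWnn (M+2); positivity
        have h2 : Z (M+2) t = Z (M+1+1) t := by norm_num
        rw [h2] at hid
        linarith [hid, ih]
  have hkey := key N hN
  -- bound the boundary term
  have hbd : -(Z N t * W N t * Z (N+1) t)
      ≤ (Y N t) ^ 3 + (X (N+1) t) ^ 3 + (X N t) ^ 3 + (Y (N+1) t) ^ 3 := by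
    have h1 : Y N t ^ 2 * X (N+1) t ≤ Y N t ^ 3 + X (N+1) t ^ 3 :=
      cube_help _ _ (hYnn N t ht) (hXnn (N+1) t ht)
    have h2 : X N t ^ 2 * Y (N+1) t ≤ X N t ^ 3 + Y (N+1) t ^ 3 :=
      cube_help _ _ (hXnn N t ht) (hYnn (N+1) t ht)
    have h3 : (0:ℝ) ≤ Y N t ^ 2 * Y (N+1) t :=
      mul_nonneg (sq_nonneg _) (hYnn (N+1) t ht)
    have h4 : (0:ℝ) ≤ X N t ^ 2 * X (N+1) t :=
      mul_nonneg (sq_nonneg _) (hXnn (N+1) t ht)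
    rw [hZ N t, hZ (N+1) t, hW N t]
    nlinarith [h1, h2, h3, h4]
  have hpow : (2:ℝ) ^ (-(N:ℤ)) = ((2:ℝ) ^ N)⁻¹ := by
    rw [zpow_neg, zpow_natCast]
  calc (∑ n ∈ Finset.Icc 1 N, (2 * Z n t * D n) / 2 ^ n)
      ≤ -(k N * Z N t * W N t * Z (N+1) t / 2 ^ N) := by linarith [hkey]
    _ = k N / 2 ^ N * (-(Z N t * W N t * Z (N+1) t)) := by ring
    _ ≤ k N / 2 ^ N
          * ((Y N t) ^ 3 + (X (N+1) t) ^ 3 + (X N t) ^ 3 + (Y (N+1) t) ^ 3) := by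
        apply mul_le_mul_of_nonneg_left hbd
        have := hknn N; positivity
    _ = 2 ^ (-(N:ℤ)) * k N
          * ((Y N t) ^ 3 + (X (N+1) t) ^ 3 + (X N t) ^ 3 + (Y (N+1) t) ^ 3) := by
        rw [hpow]; ring
end

section
/- (Invariant region for the truncated rescaled system) Let β ≥ 1, N ≥ 1, and let (Y_n)_{1≤n≤N} solve Y_n' = 2^{((2β+1)/3)n - (β+2)/3} (Y_{n-1}² - 2 Y_n Y_{n+1}) for n = 1,…,N with conventions Y_0 ≡ 0 and Y_{N+1} := Y_N. Define A := {(x,y) ∈ [0,1]² : h(x) ≤ y ≤ g(x)} with g(x) = (4/5)x + 1/2 and h(x) = (1/2)((x - 1/12)/(1 - 1/12))³ (h taken as 0 for x ≤ 1/12, and the constraint y ≤ g(x) only active where g ≤ 1). If (Y_n(0), Y_{n+1}(0)) ∈ A for all n ≤ N-1, then (Y_n(t), Y_{n+1}(t)) ∈ A for all n ≤ N-1 and all t ≥ 0. -/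
open Filter Set Real Topology

noncomputable def Hf (x : ℝ) : ℝ := if x ≤ 1/12 then 0 else (1/2)*((x-1/12)/(11/12))^3
noncomputable def Hd (x : ℝ) : ℝ := if x ≤ 1/12 then 0 else (3/2)*((x-1/12)/(11/12))^2*(12/11)

lemma Hf_of_le {x : ℝ} (h : x ≤ 1/12) : Hf x = 0 := if_pos h
lemma Hf_of_gt {x : ℝ} (h : ¬ x ≤ 1/12) : Hf x = (1/2)*((x-1/12)/(11/12))^3 := if_neg h
lemma Hd_of_le {x : ℝ} (h : x ≤ 1/12) : Hd x = 0 := if_pos h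
lemma Hd_of_gt {x : ℝ} (h : ¬ x ≤ 1/12) : Hd x = (3/2)*((x-1/12)/(11/12))^2*(12/11) := if_neg h

lemma Hf_nonneg (x : ℝ) : 0 ≤ Hf x := by
  rcases le_or_gt x (1/12) with h | h
  · rw [Hf_of_le h]
  · rw [Hf_of_gt (not_le.2 h)]
    have h3 : (0:ℝ) ≤ ((x-1/12)/(11/12))^3 :=
      pow_nonneg (by linarith) 3
    linarith

lemma Hd_nonneg (x : ℝ) : 0 ≤ Hd x := by
  rcases le_or_gt x (1/12) with h | h
  · rw [Hd_of_le h]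
  · rw [Hd_of_gt (not_le.2 h)]
    positivity

lemma Hf_le_cube (x : ℝ) : Hf x ≤ |x - 1/12|^3 := by
  rcases le_or_gt x (1/12) with h | h
  · rw [Hf_of_le h]; positivity
  · rw [Hf_of_gt (not_le.2 h), abs_of_nonneg (by linarith : (0:ℝ) ≤ x - 1/12)]
    have h0 : (0:ℝ) ≤ x - 1/12 := by linarith
    have h3 : (0:ℝ) ≤ (x-1/12)^3 := pow_nonneg h0 3
    rw [div_pow]
    have h4 : ((11:ℝ)/12)^3 = 1331/1728 := by norm_num
    rw [h4]
    linarith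

lemma hasDerivAt_Hf (x : ℝ) : HasDerivAt Hf (Hd x) x := by
  rcases lt_trichotomy x (1/12) with h | h | h
  · have hev : (fun _: ℝ => (0:ℝ)) =ᶠ[𝓝 x] Hf := by
      filter_upwards [Iio_mem_nhds h] with z hz
      exact (Hf_of_le (mem_Iio.1 hz).le).symm
    have h0 : HasDerivAt (fun _ : ℝ => (0:ℝ)) 0 x := hasDerivAt_const x 0
    rw [Hd_of_le h.le]
    exact h0.congr_of_eventuallyEq hev.symm
  · subst h
    have : HasDerivAt Hf 0 (1/12) := by
      rw [hasDerivAt_iff_isLittleO, Asymptotics.isLittleO_iff]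
      intro ε hε
      filter_upwards [Metric.ball_mem_nhds (1/12 : ℝ) (lt_min one_pos hε)] with z hz
      rw [Real.ball_eq_Ioo] at hz
      have hz1 : |z - 1/12| < min 1 ε := by
        rw [abs_sub_lt_iff]
        constructor
        · linarith [hz.2, min_le_left (1:ℝ) ε, min_le_right (1:ℝ) ε]
        · linarith [hz.1]
      have hza : |z - 1/12| ≤ 1 := hz1.le.trans (min_le_left _ _)
      have hzb : |z - 1/12| ≤ ε := hz1.le.trans (min_le_right _ _)
      have h2 : 0 ≤ Hf z := Hf_nonneg z
      have h3 : Hf (1/12 : ℝ) = 0 := Hf_of_le le_rfl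
      simp only [h3, smul_eq_mul, mul_zero, sub_zero, Real.norm_eq_abs]
      rw [abs_of_nonneg h2]
      calc Hf z ≤ |z - 1/12|^3 := Hf_le_cube z
        _ = |z-1/12| * |z-1/12| * |z-1/12| := by ring
        _ ≤ 1 * ε * |z-1/12| := by
            exact mul_le_mul_of_nonneg_right
              (mul_le_mul hza hzb (abs_nonneg _) zero_le_one) (abs_nonneg _)
        _ = ε * |z - 1/12| := by ring
    rw [Hd_of_le le_rfl]
    exact this
  · have hev : (fun z : ℝ => (1/2)*((z-1/12)/(11/12))^3) =ᶠ[𝓝 x] Hf := by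
      filter_upwards [Ioi_mem_nhds h] with z hz
      exact (Hf_of_gt (not_le.2 (mem_Ioi.1 hz))).symm
    have h1 : HasDerivAt (fun z : ℝ => (z-1/12)/(11/12)) (1/(11/12)) x := by
      exact ((hasDerivAt_id x).sub_const (1/12)).div_const (11/12)
    have h2 := (h1.pow 3).const_mul (1/2 : ℝ)
    have h3 := h2.congr_of_eventuallyEq hev.symm
    rw [Hd_of_gt (not_le.2 h)]
    refine h3.congr_deriv ?_
    push_cast
    ring

set_option maxHeartbeats 1600000 in
lemma polyL1 (x s : ℝ) (hx0 : 0 ≤ x) (hs0 : 0 ≤ s) :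
    2*x^2 + 8/5*x*(4/5*x+1/2+s) ≤
    4*(4/5*x+1/2+s)*((1/2)*(((4/5*x+1/2+s)-1/12)/(11/12))^3) := by
  nlinarith [sq_nonneg (x - 359/1000), sq_nonneg x, sq_nonneg s, mul_nonneg hs0 hx0,
    sq_nonneg (x-1/2), sq_nonneg (x*s)]

set_option maxHeartbeats 1600000 in
lemma polyG0 (x : ℝ) (hx : 1/12 ≤ x) (hx1 : x ≤ 101/100) :
    (3/2)*((x-1/12)/(11/12))^2*(12/11) * (1 - 2*x*((1/2)*((x-1/12)/(11/12))^3))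
    ≤ 2*(x^2 - 2*((1/2)*((x-1/12)/(11/12))^3)*(4/5*((1/2)*((x-1/12)/(11/12))^3)+1/2)) := by
  nlinarith [sq_nonneg (x - 795/1000), sq_nonneg ((x-1/12)^2 - 507/1000),
    sq_nonneg ((x-1/12)^3 - 36/100), mul_nonneg (sub_nonneg.2 hx) (sub_nonneg.2 hx),
    sq_nonneg (x-1/2), sq_nonneg ((x-1/12)*(x-795/1000)), sq_nonneg ((x-1/12)^2*(x-795/1000))]

set_option maxHeartbeats 1600000 in
lemma polyL3 (x s : ℝ) (hx : 1/12 ≤ x) (hx1 : x ≤ 1+s) (hs0 : 0 ≤ s) (hs1 : s ≤ 1/100) :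
    (3/2)*((x-1/12)/(11/12))^2*(12/11) * ((1+s)^2 - 2*x*((1/2)*((x-1/12)/(11/12))^3 - s))
    ≤ 2*(x^2 - 2*((1/2)*((x-1/12)/(11/12))^3 - s)*(4/5*((1/2)*((x-1/12)/(11/12))^3 - s)+1/2+s)) + 50*s := by
  have hx1' : x ≤ 101/100 := by linarith
  have h0 := polyG0 x hx hx1'
  nlinarith [h0, mul_nonneg hs0 hs0, mul_nonneg hs0 (sub_nonneg.2 hx),
    mul_nonneg (mul_nonneg hs0 (sub_nonneg.2 hx)) (sub_nonneg.2 hx), sq_nonneg (x-1/12),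
    mul_nonneg hs0 (sq_nonneg (x-1/12)), mul_nonneg (mul_nonneg hs0 hs0) hs0,
    mul_nonneg (mul_nonneg hs0 hs0) (sub_nonneg.2 hx)]

set_option maxHeartbeats 1600000 in
lemma polyQ (x : ℝ) (hx : 1/12 ≤ x) (hx1 : x ≤ 101/100) :
    1/200 ≤ x^2 - 8/5*((1/2)*((x-1/12)/(11/12))^3)^2 - (1/2)*((x-1/12)/(11/12))^3 := by
  have hp : 0 ≤ x - 1/12 := by linarith
  have hq : 0 ≤ 101/100 - x := by linarith
  nlinarith [mul_nonneg hp hq, mul_nonneg (mul_nonneg hp hp) hq, mul_nonneg (mul_nonneg (mul_nonneg hp hp) hp) hq,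
    mul_nonneg (mul_nonneg (mul_nonneg (mul_nonneg hp hp) hp) hp) hq,
    mul_nonneg (mul_nonneg (mul_nonneg (mul_nonneg (mul_nonneg hp hp) hp) hp) hp) hq,
    sq_nonneg ((x-1/12)^3 - 1/4), sq_nonneg ((x-1/12)^2 - 1/3), mul_nonneg hp hp]

lemma polyHb (x : ℝ) (hx : 1/12 ≤ x) (hx1 : x ≤ 101/100) :
    (1/2)*((x-1/12)/(11/12))^3 ≤ 13/25 := by
  have hp : 0 ≤ x - 1/12 := by linarith
  nlinarith [mul_nonneg hp hp, mul_nonneg (mul_nonneg hp hp) hp]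

set_option maxHeartbeats 1600000 in
lemma polyL4 (x s : ℝ) (hx : 1/12 ≤ x) (hx1 : x ≤ 1+s) (hs0 : 0 ≤ s) (hs1 : s ≤ 1/100) :
    0 ≤ x^2 - 2*((1/2)*((x-1/12)/(11/12))^3 - s)*(4/5*((1/2)*((x-1/12)/(11/12))^3 - s)+1/2+s) := by
  have hx' : x ≤ 101/100 := by linarith
  have hq := polyQ x hx hx'
  have hb := polyHb x hx hx'
  have hH0 : 0 ≤ (1/2)*((x-1/12)/(11/12))^3 := by
    have : (0:ℝ) ≤ ((x-1/12)/(11/12))^3 := pow_nonneg (by linarith) 3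
    linarith
  nlinarith [hq, hb, hH0, mul_nonneg hs0 hs0, mul_nonneg hs0 hH0,
    mul_nonneg (mul_nonneg hs0 hs0) hs0]
-- Hf x ≤ x + s  for x ∈ [-s, 1+s], s ∈ [0,1/100]
lemma Hf_le_self {x s : ℝ} (hs0 : 0 ≤ s) (hs1 : s ≤ 1/100) (hx0 : -s ≤ x) (hx1 : x ≤ 1+s) :
    Hf x ≤ x + s := by
  rcases le_or_gt x (1/12) with h | h
  · rw [Hf_of_le h]; linarith
  · rw [Hf_of_gt (not_le.2 h)]
    nlinarith [sq_nonneg (x-1/12), mul_nonneg (by linarith : (0:ℝ) ≤ x - 1/12) (sq_nonneg (x-1/12))]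

-- 1/2 ≤ Hf (1+s) for s ≥ 0
lemma Hf_one {s : ℝ} (hs0 : 0 ≤ s) : 1/2 ≤ Hf (1+s) := by
  rw [Hf_of_gt (by norm_num; linarith)]
  have h : (1:ℝ) ≤ (1+s-1/12)/(11/12) := by
    rw [le_div_iff₀ (by norm_num : (0:ℝ) < 11/12)]
    linarith
  nlinarith [h, sq_nonneg ((1+s-1/12)/(11/12)), mul_nonneg (sub_nonneg.2 h) (sq_nonneg ((1+s-1/12)/(11/12)))]

lemma estE1 {c a x y s : ℝ} (hc : 0 < c) (hs : 0 < s) (hs1 : s ≤ 1/100)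
    (hx : x = -s) (hy : -s ≤ y) : -(c*(a^2 - 2*x*y)) ≤ c*s := by
  subst hx
  nlinarith [sq_nonneg a, mul_nonneg (mul_nonneg hc.le hs.le) (by linarith : (0:ℝ) ≤ y + s),
    mul_pos hc hs, mul_nonneg (mul_nonneg hc.le hs.le) hs.le]

lemma estE2 {c a x y s : ℝ} (hc : 0 < c) (hs : 0 < s) (hs1 : s ≤ 1/100)
    (hx : x = 1+s) (hy : 1/2 - s ≤ y) (ha0 : -s ≤ a) (ha1 : a ≤ 1+s) :
    c*(a^2 - 2*x*y) ≤ 4*(c*s) := by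
  subst hx
  have h1 : a^2 ≤ (1+s)^2 := by nlinarith
  have h2 : (1+s)^2 - 2*(1+s)*y ≤ (1+s)^2 - 2*(1+s)*(1/2-s) := by nlinarith
  have h3 : (1+s)^2 - 2*(1+s)*(1/2-s) = 3*s*(1+s) := by ring
  nlinarith [mul_pos hc hs]

set_option maxHeartbeats 1600000 in
lemma estE3 {c d a x y w s : ℝ} (hc : 0 < c) (hcd : 2*c ≤ d) (hs : 0 < s) (hs1 : s ≤ 1/100)
    (hy : y = 4/5*x + 1/2 + s) (hx0 : -s ≤ x) (hy1 : y ≤ 1+s) (hw : Hf y - s ≤ w) :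
    d*(x^2 - 2*y*w) - 4/5*(c*(a^2 - 2*x*y)) ≤ 3*(d*s) := by
  have hd0 : 0 < d := by linarith
  have hy12 : (1:ℝ)/2 ≤ y := by rw [hy]; linarith
  have hHy : Hf y = (1/2)*((y-1/12)/(11/12))^3 := Hf_of_gt (by push_neg; linarith)
  have hH0 : 0 ≤ Hf y := Hf_nonneg y
  have hyw : x^2 - 2*y*w ≤ x^2 - 2*y*(Hf y) + 2*y*s := by nlinarith
  have t1 : d*(x^2 - 2*y*w) ≤ d*(x^2 - 2*y*(Hf y) + 2*y*s) :=
    mul_le_mul_of_nonneg_left hyw hd0.le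
  have t3 : d*(2*y*s) ≤ 3*(d*s) := by
    nlinarith [mul_nonneg (mul_nonneg hd0.le hs.le) (by linarith : (0:ℝ) ≤ 1+s-y),
      mul_nonneg (mul_nonneg hd0.le hs.le) (by linarith : (0:ℝ) ≤ 1/100 - s)]
  have f4 : 0 ≤ c*a^2 := mul_nonneg hc.le (sq_nonneg a)
  rcases le_or_gt 0 x with hxp | hxn
  · have l1 := polyL1 x s hxp hs.le
    rw [← hy, ← hHy] at l1
    have h1 : x^2 - 2*y*(Hf y) ≤ 0 := by nlinarith [mul_nonneg hxp (by linarith : (0:ℝ) ≤ y)]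
    have hmono : (d - 2*c)*(x^2 - 2*y*(Hf y)) ≤ 0 :=
      mul_nonpos_of_nonneg_of_nonpos (by linarith) h1
    have hfin := mul_le_mul_of_nonneg_left l1 hc.le
    linarith [t1, t3, hmono, hfin, f4]
  · have hHlow : 125/2662 ≤ Hf y := by
      rw [hHy]
      nlinarith [sq_nonneg (y-1/2), mul_nonneg (by linarith : (0:ℝ) ≤ y-1/2) (sq_nonneg (y-1/2))]
    have h2 : c*(x*y) ≤ 0 := mul_nonpos_of_nonneg_of_nonpos hc.le
      (mul_nonpos_of_nonpos_of_nonneg hxn.le (by linarith))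
    have hQ0 : x^2 - 2*y*(Hf y) ≤ 0 := by
      nlinarith [mul_nonneg (by linarith : (0:ℝ) ≤ y - 1/2)
        (by linarith : (0:ℝ) ≤ Hf y - 125/2662)]
    have t6 : d*(x^2 - 2*y*(Hf y)) ≤ 0 := mul_nonpos_of_nonneg_of_nonpos hd0.le hQ0
    linarith [t1, t3, t6, h2, f4]

set_option maxHeartbeats 1600000 in
lemma estE4 {c d a x y w s : ℝ} (hc : 0 < c) (hcd : 2*c ≤ d) (hs : 0 < s) (hs1 : s ≤ 1/100)
    (hy : y = Hf x - s) (hx0 : -s ≤ x) (hx1 : x ≤ 1+s) (ha0 : -s ≤ a) (ha1 : a ≤ 1+s)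
    (hw0 : -s ≤ w) (hw1 : w ≤ 4/5*y + 1/2 + s) :
    Hd x * (c*(a^2 - 2*x*y)) - d*(x^2 - 2*y*w) ≤ 30*(d*s) := by
  have hd0 : 0 < d := by linarith
  have hy0 : -s ≤ y := by rw [hy]; linarith [Hf_nonneg x]
  have hyw : 2*y*w ≤ 2*y*(4/5*y+1/2+s) + 2*s := by
    rcases le_or_gt 0 y with h | h
    · nlinarith [mul_le_mul_of_nonneg_left hw1 (by linarith : (0:ℝ) ≤ 2*y)]
    · have h1 : y*w ≤ y*(-s) := by nlinarith
      nlinarith [h1, mul_nonneg hs.le hs.le]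
  have step3 : d*(x^2 - 2*y*(4/5*y+1/2+s) - 2*s) ≤ d*(x^2 - 2*y*w) :=
    mul_le_mul_of_nonneg_left (by linarith) hd0.le
  rcases le_or_gt x (1/12) with hx12 | hx12
  · rw [Hd_of_le hx12]
    have hy' : y = -s := by rw [hy, Hf_of_le hx12]; ring
    subst hy'
    linarith [step3, mul_nonneg hd0.le (sq_nonneg x), mul_nonneg (mul_nonneg hd0.le hs.le) hs.le,
      mul_pos hd0 hs, mul_nonneg (mul_nonneg (mul_nonneg hd0.le hs.le) hs.le) hs.le]
  · have hHd : Hd x = (3/2)*((x-1/12)/(11/12))^2*(12/11) := Hd_of_gt (not_le.2 hx12)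
    have hHf : Hf x = (1/2)*((x-1/12)/(11/12))^3 := Hf_of_gt (not_le.2 hx12)
    have hHd0 : 0 ≤ Hd x := Hd_nonneg x
    have key : (1/2)*((x-1/12)/(11/12))^3 - s = y := by rw [hy, hHf]
    have l3 := polyL3 x s hx12.le hx1 hs.le hs1
    have l4 := polyL4 x s hx12.le hx1 hs.le hs1
    rw [key] at l4
    rw [key, ← hHd] at l3
    have ha2 : a^2 ≤ (1+s)^2 := by nlinarith
    have step1 : Hd x * (c*(a^2 - 2*x*y)) ≤ c * (Hd x * ((1+s)^2 - 2*x*y)) := by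
      have h5 : Hd x * (a^2) ≤ Hd x * ((1+s)^2) := mul_le_mul_of_nonneg_left ha2 hHd0
      have h6 := mul_le_mul_of_nonneg_left h5 hc.le
      linarith [h6]
    have step2 : c * (Hd x * ((1+s)^2 - 2*x*y)) ≤
        c * (2*(x^2 - 2*y*(4/5*y+1/2+s)) + 50*s) := mul_le_mul_of_nonneg_left l3 hc.le
    have step4 : (d - 2*c) * (x^2 - 2*y*(4/5*y+1/2+s)) ≥ 0 :=
      mul_nonneg (by linarith) l4
    have t5 : c*(50*s) ≤ 25*(d*s) := by nlinarith [mul_nonneg (by linarith : (0:ℝ) ≤ d - 2*c) hs.le]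
    linarith [step1, step2, step3, step4, t5, mul_pos hd0 hs]

-- if f T = g T and f' < g' then f < g just after T
lemma push_lt {T : ℝ} {f g : ℝ → ℝ} {f' g' : ℝ} (hf : HasDerivAt f f' T)
    (hg : HasDerivAt g g' T) (heq : f T = g T) (hlt : f' < g') :
    ∀ᶠ u in 𝓝[>] T, f u < g u := by
  have h := hf.sub hg
  have hs : Tendsto (slope (fun u => f u - g u) T) (𝓝[≠] T) (𝓝 (f' - g')) :=
    hasDerivAt_iff_tendsto_slope.1 h
  have hneg : ∀ᶠ u in 𝓝[≠] T, slope (fun u => f u - g u) T u < 0 :=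
    hs.eventually_lt_const (by linarith)
  have hmono : 𝓝[>] T ≤ 𝓝[≠] T := nhdsWithin_mono T fun u hu => ne_of_gt hu
  filter_upwards [hneg.filter_mono hmono, self_mem_nhdsWithin] with u hu hu'
  have hu'' : (T:ℝ) < u := hu'
  rw [slope_def_field] at hu
  have hd : 0 < u - T := by linarith
  have : (f u - g u - (f T - g T)) / (u - T) < 0 := by
    simpa [heq] using hu
  have h2 : f u - g u - (f T - g T) < 0 := by
    by_contra hcon
    push_neg at hcon
    exact absurd (div_nonneg hcon hd.le) (not_le.2 this)
  rw [heq] at h2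
  linarith

lemma evlt {T : ℝ} {f g : ℝ → ℝ} {f' g' : ℝ} (hf : HasDerivAt f f' T)
    (hg : HasDerivAt g g' T) (hle : f T ≤ g T) (hder : f T = g T → f' < g') :
    ∀ᶠ u in 𝓝[>] T, f u < g u := by
  rcases eq_or_lt_of_le hle with heq | hlt
  · exact push_lt hf hg heq (hder heq)
  · exact (hf.continuousAt.eventually_lt hg.continuousAt hlt).filter_mono nhdsWithin_le_nhds

lemma closed_le {T : ℝ} (hT : 0 < T) {G Bf : ℝ → ℝ} (hG : ContinuousAt G T)
    (hB : ContinuousAt Bf T) (h : ∀ s : ℝ, 0 ≤ s → s < T → G s ≤ Bf s) : G T ≤ Bf T := by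
  by_contra hc
  push_neg at hc
  have hev : ∀ᶠ u in 𝓝[<] T, Bf u < G u :=
    (hB.eventually_lt hG hc).filter_mono nhdsWithin_le_nhds
  have hev2 : ∀ᶠ u in 𝓝[<] T, 0 < u :=
    (eventually_gt_nhds hT).filter_mono nhdsWithin_le_nhds
  have hev3 : ∀ᶠ u in 𝓝[<] T, u < T := eventually_mem_nhdsWithin
  obtain ⟨u, h1, h2, h3⟩ := (hev.and (hev2.and hev3)).exists
  exact absurd (h u h2.le h3) (not_le.2 h1)

noncomputable def coef (β : ℝ) (n : ℕ) : ℝ := (2:ℝ)^((2*β+1)/3*(n:ℝ) - (β+2)/3)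

lemma coef_pos (β : ℝ) (n : ℕ) : 0 < coef β n := Real.rpow_pos_of_pos two_pos _

lemma coef_ratio (β : ℝ) (hβ : 1 ≤ β) (n : ℕ) : 2 * coef β n ≤ coef β (n+1) := by
  have he : (2*β+1)/3*(((n:ℕ)+1:ℕ):ℝ) - (β+2)/3
      = (2*β+1)/3 + ((2*β+1)/3*(n:ℝ) - (β+2)/3) := by push_cast; ring
  have h1 : coef β (n+1) = (2:ℝ)^((2*β+1)/3) * coef β n := by
    rw [coef, coef, he, Real.rpow_add two_pos]
  rw [h1]
  have h2 : (2:ℝ) ≤ (2:ℝ)^((2*β+1)/3) := by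
    calc (2:ℝ) = (2:ℝ)^(1:ℝ) := (Real.rpow_one 2).symm
    _ ≤ _ := Real.rpow_le_rpow_of_exponent_le one_le_two (by linarith)
  nlinarith [coef_pos β n]

lemma coef_le (β : ℝ) (hβ : 1 ≤ β) {n N : ℕ} (h : n ≤ N) :
    coef β n ≤ (2:ℝ)^((2*β+1)/3*(N:ℝ)) := by
  apply Real.rpow_le_rpow_of_exponent_le one_le_two
  have : (n:ℝ) ≤ (N:ℝ) := Nat.cast_le.2 h
  nlinarith

lemma one_le_CB (β : ℝ) (hβ : 1 ≤ β) (N : ℕ) : 1 ≤ (2:ℝ)^((2*β+1)/3*(N:ℝ)) := by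
  calc (1:ℝ) = (2:ℝ)^(0:ℝ) := (Real.rpow_zero 2).symm
  _ ≤ _ := Real.rpow_le_rpow_of_exponent_le one_le_two (by positivity)

def GoodP (Y : ℕ → ℝ → ℝ) (N : ℕ) (B : ℝ) (u : ℝ) : Prop :=
  ∀ n : ℕ, 1 ≤ n → n + 1 ≤ N →
    (-B ≤ Y n u ∧ Y n u ≤ 1 + B) ∧ (-B ≤ Y (n+1) u ∧ Y (n+1) u ≤ 1 + B) ∧
    Hf (Y n u) - Y (n+1) u ≤ B ∧ Y (n+1) u - (4/5 * Y n u + 1/2) ≤ B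

lemma GoodP_facts {Y : ℕ → ℝ → ℝ} {N : ℕ} {B u : ℝ} (hN2 : 2 ≤ N)
    (hY0 : Y 0 u = 0) (hYtop : Y (N+1) u = Y N u)
    (hB0 : 0 < B) (hB1 : B ≤ 1/100) (h : GoodP Y N B u) :
    (∀ m : ℕ, m ≤ N+1 → -B ≤ Y m u ∧ Y m u ≤ 1 + B) ∧
    (∀ m : ℕ, 1 ≤ m → m ≤ N → Hf (Y m u) - Y (m+1) u ≤ B) ∧
    (∀ m : ℕ, 1 ≤ m → m ≤ N → Y (m+1) u - (4/5 * Y m u + 1/2) ≤ B) := by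
  have box : ∀ m : ℕ, 1 ≤ m → m ≤ N → -B ≤ Y m u ∧ Y m u ≤ 1 + B := by
    intro m h1 h2
    rcases lt_or_eq_of_le h2 with hlt | heq
    · exact (h m h1 (by omega)).1
    · have h3 : 1 ≤ m - 1 := by omega
      have h5 := (h (m-1) h3 (by omega)).2.1
      rw [(by omega : m - 1 + 1 = m)] at h5
      exact h5
  refine ⟨?_, ?_, ?_⟩
  · intro m hm
    rcases Nat.eq_zero_or_pos m with h0 | h1
    · subst h0; rw [hY0]; constructor <;> linarith
    rcases lt_or_eq_of_le hm with hlt | heq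
    · exact box m h1 (by omega)
    · rw [heq, hYtop]; exact box N (by omega) le_rfl
  · intro m h1 h2
    rcases lt_or_eq_of_le h2 with hlt | heq
    · exact (h m h1 (by omega)).2.2.1
    · subst heq
      rw [hYtop]
      have hb := box m (by omega) le_rfl
      have := Hf_le_self hB0.le hB1 hb.1 hb.2
      linarith
  · intro m h1 h2
    rcases lt_or_eq_of_le h2 with hlt | heq
    · exact (h m h1 (by omega)).2.2.2
    · subst heq
      rw [hYtop]
      have hb := box m (by omega) le_rfl
      linarith [hb.1, hb.2]


theorem keyLemma (β : ℝ) (hβ : 1 ≤ β) (N : ℕ) (hN2 : 2 ≤ N) (Y : ℕ → ℝ → ℝ)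
    (hY0 : ∀ t : ℝ, Y 0 t = 0) (hYtop : ∀ t : ℝ, Y (N+1) t = Y N t)
    (hODE : ∀ n : ℕ, 1 ≤ n → n ≤ N → ∀ t : ℝ, 0 ≤ t →
      HasDerivAt (Y n) (coef β n * ((Y (n-1) t) ^ 2 - 2 * Y n t * Y (n+1) t)) t)
    (hinit : ∀ n : ℕ, 1 ≤ n → n + 1 ≤ N →
      (0 ≤ Y n 0 ∧ Y n 0 ≤ 1) ∧ (0 ≤ Y (n+1) 0 ∧ Y (n+1) 0 ≤ 1) ∧
      Hf (Y n 0) ≤ Y (n+1) 0 ∧ Y (n+1) 0 ≤ 4/5 * Y n 0 + 1/2)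
    (CC : ℝ) (hCC1 : 1 ≤ CC)
    (hCC : ∀ n : ℕ, n ≤ N → coef β n ≤ CC)
    (b : ℝ) (hb : 0 ≤ b) (ε : ℝ) (hε : 0 < ε)
    (hεb : ε * Real.exp (100*CC*b) ≤ 1/100) :
    ∀ t ∈ Icc (0:ℝ) b, GoodP Y N (ε * Real.exp (100*CC*t)) t := by
  set K : ℝ := 100*CC with hK
  have hKpos : 0 < K := by rw [hK]; linarith
  set Bv : ℝ → ℝ := fun v => ε * Real.exp (K*v) with hBv
  have hBpos : ∀ u : ℝ, 0 < Bv u := fun u => mul_pos hε (exp_pos _)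
  have hBmono : ∀ u : ℝ, 0 ≤ u → u ≤ b → Bv u ≤ 1/100 := by
    intro u hu0 hub
    have h1 : Real.exp (K*u) ≤ Real.exp (K*b) :=
      Real.exp_le_exp.2 (mul_le_mul_of_nonneg_left hub hKpos.le)
    calc Bv u = ε * Real.exp (K*u) := rfl
      _ ≤ ε * Real.exp (K*b) := by nlinarith
      _ ≤ 1/100 := hεb
  have hBder : ∀ u : ℝ, HasDerivAt Bv (K * Bv u) u := by
    intro u
    have h1 : HasDerivAt (fun v : ℝ => K*v) K u := by
      simpa using (hasDerivAt_id u).const_mul K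
    have h2 := (Real.hasDerivAt_exp (K*u)).comp u h1
    have h3 := h2.const_mul ε
    have : ε * (Real.exp (K*u) * K) = K * Bv u := by rw [hBv]; ring
    rw [this] at h3
    exact h3
  have hBcont : ∀ u : ℝ, ContinuousAt Bv u := fun u => (hBder u).continuousAt
  have hYcont : ∀ m : ℕ, m ≤ N+1 → ∀ u : ℝ, 0 ≤ u → ContinuousAt (Y m) u := by
    intro m hm u hu
    rcases Nat.eq_zero_or_pos m with h0 | h1
    · subst h0
      have : Y 0 = fun _ => (0:ℝ) := funext hY0
      rw [this]; exact continuousAt_const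
    rcases lt_or_eq_of_le hm with hlt | heq
    · exact (hODE m h1 (by omega) u hu).continuousAt
    · have : Y m = Y N := by rw [heq]; exact funext hYtop
      rw [this]
      exact (hODE N (by omega) le_rfl u hu).continuousAt
  -- the set of times up to which GoodP holds
  set S : Set ℝ := {t | t ∈ Icc (0:ℝ) b ∧ ∀ u ∈ Icc (0:ℝ) t, GoodP Y N (Bv u) u} with hS
  have hP0 : GoodP Y N (Bv 0) 0 := by
    intro n h1 h2
    obtain ⟨⟨g1, g2⟩, ⟨g3, g4⟩, g5, g6⟩ := hinit n h1 h2
    have hB0 : 0 < Bv 0 := hBpos 0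
    exact ⟨⟨by linarith, by linarith⟩, ⟨by linarith, by linarith⟩, by linarith, by linarith⟩
  have hS0 : (0:ℝ) ∈ S := by
    refine ⟨⟨le_rfl, hb⟩, ?_⟩
    intro u hu
    have : u = 0 := le_antisymm hu.2 hu.1
    rw [this]; exact hP0
  have hSbdd : BddAbove S := ⟨b, fun t ht => ht.1.2⟩
  set T : ℝ := sSup S with hT
  have hT0 : 0 ≤ T := le_csSup hSbdd hS0
  have hTb : T ≤ b := csSup_le ⟨0, hS0⟩ (fun t ht => ht.1.2)
  have hbelow : ∀ u : ℝ, 0 ≤ u → u < T → GoodP Y N (Bv u) u := by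
    intro u hu0 huT
    obtain ⟨t, htS, hut⟩ := exists_lt_of_lt_csSup ⟨0, hS0⟩ huT
    exact htS.2 u ⟨hu0, hut.le⟩
  have hPT : GoodP Y N (Bv T) T := by
    rcases eq_or_lt_of_le hT0 with h0 | hTpos
    · rw [← h0]; exact hP0
    · intro n h1 h2
      have hc1 : ContinuousAt (Y n) T := hYcont n (by omega) T hT0
      have hc2 : ContinuousAt (Y (n+1)) T := hYcont (n+1) (by omega) T hT0
      have hcH : ContinuousAt (fun u => Hf (Y n u)) T :=
        ((hasDerivAt_Hf (Y n T)).continuousAt).comp hc1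
      refine ⟨⟨?_, ?_⟩, ⟨?_, ?_⟩, ?_, ?_⟩
      · have h := closed_le hTpos (G := fun u => -(Y n u)) (Bf := Bv) hc1.neg (hBcont T)
          (fun s hs0 hsT => by
            show -(Y n s) ≤ Bv s
            linarith [((hbelow s hs0 hsT) n h1 h2).1.1])
        have h2 : -(Y n T) ≤ Bv T := h
        linarith
      · have h := closed_le hTpos (G := fun u => Y n u - 1) (Bf := Bv) (hc1.sub continuousAt_const) (hBcont T)
          (fun s hs0 hsT => by
            show Y n s - 1 ≤ Bv s
            linarith [((hbelow s hs0 hsT) n h1 h2).1.2])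
        have h2 : Y n T - 1 ≤ Bv T := h
        linarith
      · have h := closed_le hTpos (G := fun u => -(Y (n+1) u)) (Bf := Bv) hc2.neg (hBcont T)
          (fun s hs0 hsT => by
            show -(Y (n+1) s) ≤ Bv s
            linarith [((hbelow s hs0 hsT) n h1 h2).2.1.1])
        have h2 : -(Y (n+1) T) ≤ Bv T := h
        linarith
      · have h := closed_le hTpos (G := fun u => Y (n+1) u - 1) (Bf := Bv) (hc2.sub continuousAt_const) (hBcont T)
          (fun s hs0 hsT => by
            show Y (n+1) s - 1 ≤ Bv s
            linarith [((hbelow s hs0 hsT) n h1 h2).2.1.2])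
        have h2 : Y (n+1) T - 1 ≤ Bv T := h
        linarith
      · exact closed_le hTpos (G := fun u => Hf (Y n u) - Y (n+1) u) (Bf := Bv) (hcH.sub hc2) (hBcont T)
          (fun s hs0 hsT => ((hbelow s hs0 hsT) n h1 h2).2.2.1)
      · exact closed_le hTpos (G := fun u => Y (n+1) u - (4/5 * Y n u + 1/2)) (Bf := Bv)
          (hc2.sub ((hc1.const_smul (4/5:ℝ)).add continuousAt_const)) (hBcont T)
          (fun s hs0 hsT => ((hbelow s hs0 hsT) n h1 h2).2.2.2)
  have hstep : ¬ (T < b) := by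
    intro hTlt
    obtain ⟨box, linklo, linkhi⟩ := GoodP_facts hN2 (hY0 T) (hYtop T) (hBpos T)
      (hBmono T hT0 hTb) hPT
    have hs0pos : 0 < Bv T := hBpos T
    have hs0small : Bv T ≤ 1/100 := hBmono T hT0 hTb
    have hev : ∀ n ∈ Finset.Icc 1 (N-1), ∀ᶠ u in 𝓝[>] T,
        (-(Bv u) < Y n u ∧ Y n u < 1 + Bv u) ∧
        (-(Bv u) < Y (n+1) u ∧ Y (n+1) u < 1 + Bv u) ∧
        Hf (Y n u) - Y (n+1) u < Bv u ∧ Y (n+1) u - (4/5 * Y n u + 1/2) < Bv u := by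
      intro n hn
      rw [Finset.mem_Icc] at hn
      have h1 : 1 ≤ n := hn.1
      have h2 : n + 1 ≤ N := by omega
      have hdn := hODE n h1 (by omega) T hT0
      have hdn1 := hODE (n+1) (by omega) h2 T hT0
      rw [Nat.add_sub_cancel] at hdn1
      have hcpos := coef_pos β n
      have hcpos1 := coef_pos β (n+1)
      have hcC : coef β n ≤ CC := hCC n (by omega)
      have hcC1 : coef β (n+1) ≤ CC := hCC (n+1) h2
      have hrat := coef_ratio β hβ n
      have e1 : ∀ᶠ u in 𝓝[>] T, -(Bv u) < Y n u := by
        have hh := evlt (f := fun u => -(Y n u)) (g := Bv) hdn.neg (hBder T)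
          (by show -(Y n T) ≤ Bv T; linarith [(box n (by omega)).1])
          (fun heq => by
            have hx : Y n T = -(Bv T) := by
              have h' : -(Y n T) = Bv T := heq
              linarith
            have hE := estE1 (a := Y (n-1) T) hcpos hs0pos hs0small hx
              (box (n+1) (by omega)).1
            have hlt2 : coef β n * Bv T < K * Bv T := by
              apply mul_lt_mul_of_pos_right _ hs0pos
              rw [hK]; linarith
            linarith)
        filter_upwards [hh] with u hu
        have h' : -(Y n u) < Bv u := hu
        linarith
      have e2 : ∀ᶠ u in 𝓝[>] T, Y n u < 1 + Bv u := by
        have hh := evlt (f := fun u => Y n u - 1) (g := Bv) (hdn.sub_const 1) (hBder T)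
          (by show Y n T - 1 ≤ Bv T; linarith [(box n (by omega)).2])
          (fun heq => by
            have hx : Y n T = 1 + Bv T := by
              have h' : Y n T - 1 = Bv T := heq
              linarith
            have hl := linklo n h1 (by omega)
            rw [hx] at hl
            have hone := Hf_one (s := Bv T) hs0pos.le
            have hE := estE2 (a := Y (n-1) T) (y := Y (n+1) T) hcpos hs0pos hs0small hx
              (by linarith) (box (n-1) (by omega)).1 (box (n-1) (by omega)).2
            have hlt2 : 4*(coef β n * Bv T) < K * Bv T := by
              rw [show 4*(coef β n * Bv T) = (4*coef β n) * Bv T by ring]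
              apply mul_lt_mul_of_pos_right _ hs0pos
              rw [hK]; linarith
            linarith [hE, hlt2])
        filter_upwards [hh] with u hu
        have h' : Y n u - 1 < Bv u := hu
        linarith
      have e3 : ∀ᶠ u in 𝓝[>] T, -(Bv u) < Y (n+1) u := by
        have hh := evlt (f := fun u => -(Y (n+1) u)) (g := Bv) hdn1.neg (hBder T)
          (by show -(Y (n+1) T) ≤ Bv T; linarith [(box (n+1) (by omega)).1])
          (fun heq => by
            have hx : Y (n+1) T = -(Bv T) := by
              have h' : -(Y (n+1) T) = Bv T := heq
              linarith
            have hE := estE1 (a := Y n T) hcpos1 hs0pos hs0small hx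
              (box (n+1+1) (by omega)).1
            have hlt2 : coef β (n+1) * Bv T < K * Bv T := by
              apply mul_lt_mul_of_pos_right _ hs0pos
              rw [hK]; linarith
            linarith)
        filter_upwards [hh] with u hu
        have h' : -(Y (n+1) u) < Bv u := hu
        linarith
      have e4 : ∀ᶠ u in 𝓝[>] T, Y (n+1) u < 1 + Bv u := by
        have hh := evlt (f := fun u => Y (n+1) u - 1) (g := Bv) (hdn1.sub_const 1) (hBder T)
          (by show Y (n+1) T - 1 ≤ Bv T; linarith [(box (n+1) (by omega)).2])
          (fun heq => by
            have hx : Y (n+1) T = 1 + Bv T := by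
              have h' : Y (n+1) T - 1 = Bv T := heq
              linarith
            have hl := linklo (n+1) (by omega) h2
            rw [hx] at hl
            have hone := Hf_one (s := Bv T) hs0pos.le
            have hE := estE2 (a := Y n T) (y := Y (n+1+1) T) hcpos1 hs0pos hs0small hx
              (by linarith) (box n (by omega)).1 (box n (by omega)).2
            have hlt2 : 4*(coef β (n+1) * Bv T) < K * Bv T := by
              rw [show 4*(coef β (n+1) * Bv T) = (4*coef β (n+1)) * Bv T by ring]
              apply mul_lt_mul_of_pos_right _ hs0pos
              rw [hK]; linarith
            linarith [hE, hlt2])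
        filter_upwards [hh] with u hu
        have h' : Y (n+1) u - 1 < Bv u := hu
        linarith
      have e5 : ∀ᶠ u in 𝓝[>] T, Hf (Y n u) - Y (n+1) u < Bv u := by
        have hdH : HasDerivAt (fun u => Hf (Y n u))
            (Hd (Y n T) * (coef β n * ((Y (n-1) T) ^ 2 - 2 * Y n T * Y (n+1) T))) T :=
          (hasDerivAt_Hf (Y n T)).comp T hdn
        have hh := evlt (f := fun u => Hf (Y n u) - Y (n+1) u) (g := Bv) (hdH.sub hdn1) (hBder T)
          (by show Hf (Y n T) - Y (n+1) T ≤ Bv T; exact linklo n h1 (by omega))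
          (fun heq => by
            have hy : Y (n+1) T = Hf (Y n T) - Bv T := by
              have h' : Hf (Y n T) - Y (n+1) T = Bv T := heq
              linarith
            have hE := estE4 hcpos hrat hs0pos hs0small hy
              (box n (by omega)).1 (box n (by omega)).2
              (box (n-1) (by omega)).1 (box (n-1) (by omega)).2
              (box (n+1+1) (by omega)).1 (linkhi (n+1) (by omega) h2 |> fun hl => by linarith)
            have hlt2 : 30*(coef β (n+1) * Bv T) < K * Bv T := by
              rw [show 30*(coef β (n+1) * Bv T) = (30*coef β (n+1)) * Bv T by ring]
              apply mul_lt_mul_of_pos_right _ hs0pos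
              rw [hK]; linarith
            linarith)
        exact hh
      have e6 : ∀ᶠ u in 𝓝[>] T, Y (n+1) u - (4/5 * Y n u + 1/2) < Bv u := by
        have hh := evlt (f := fun u => Y (n+1) u - (4/5 * Y n u + 1/2)) (g := Bv)
          (hdn1.sub ((hdn.const_mul (4/5 : ℝ)).add_const (1/2))) (hBder T)
          (by show Y (n+1) T - (4/5 * Y n T + 1/2) ≤ Bv T; exact linkhi n h1 (by omega))
          (fun heq => by
            have hy : Y (n+1) T = 4/5 * Y n T + 1/2 + Bv T := by
              have h' : Y (n+1) T - (4/5 * Y n T + 1/2) = Bv T := heq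
              linarith
            have hE := estE3 (a := Y (n-1) T) hcpos hrat hs0pos hs0small hy
              (box n (by omega)).1 (box (n+1) (by omega)).2
              (linklo (n+1) (by omega) h2 |> fun hl => by linarith)
            have hlt2 : 3*(coef β (n+1) * Bv T) < K * Bv T := by
              rw [show 3*(coef β (n+1) * Bv T) = (3*coef β (n+1)) * Bv T by ring]
              apply mul_lt_mul_of_pos_right _ hs0pos
              rw [hK]; linarith
            linarith)
        exact hh
      filter_upwards [e1, e2, e3, e4, e5, e6] with u g1 g2 g3 g4 g5 g6
      exact ⟨⟨g1, g2⟩, ⟨g3, g4⟩, g5, g6⟩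
    have hall : ∀ᶠ u in 𝓝[>] T, ∀ n ∈ Finset.Icc 1 (N-1),
        (-(Bv u) < Y n u ∧ Y n u < 1 + Bv u) ∧
        (-(Bv u) < Y (n+1) u ∧ Y (n+1) u < 1 + Bv u) ∧
        Hf (Y n u) - Y (n+1) u < Bv u ∧ Y (n+1) u - (4/5 * Y n u + 1/2) < Bv u :=
      (Filter.eventually_all_finset _).2 hev
    obtain ⟨u₀, hu₀, hsub⟩ := mem_nhdsGT_iff_exists_Ioc_subset.1 hall
    have ht₁T : T < min u₀ b := lt_min (mem_Ioi.1 hu₀) hTlt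
    have ht₁S : min u₀ b ∈ S := by
      refine ⟨⟨by linarith, min_le_right _ _⟩, ?_⟩
      intro u hu
      rcases le_or_gt u T with huT | huT
      · rcases eq_or_lt_of_le huT with heq | hlt
        · rw [heq]; exact hPT
        · exact hbelow u hu.1 hlt
      · have humem : u ∈ Ioc T u₀ := ⟨huT, le_trans hu.2 (min_le_left _ _)⟩
        have hstrict := hsub humem
        intro m hm1 hm2
        have hm := hstrict m (Finset.mem_Icc.2 ⟨hm1, by omega⟩)
        exact ⟨⟨hm.1.1.le, hm.1.2.le⟩, ⟨hm.2.1.1.le, hm.2.1.2.le⟩, hm.2.2.1.le, hm.2.2.2.le⟩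
    have := le_csSup hSbdd ht₁S
    linarith
  have hTeq : T = b := le_antisymm hTb (not_lt.1 hstep)
  intro t ht
  rcases lt_or_eq_of_le ht.2 with hlt | heq
  · exact hbelow t ht.1 (by rw [hTeq]; exact hlt)
  · have : t = T := by rw [hTeq, heq]
    rw [this]
    exact hPT


/-- The invariant region `A` for the truncated rescaled dyadic system:
if all consecutive pairs of the initial condition lie in `A`, they stay in `A`
for all `t ≥ 0`. Here `g x = (4/5)x + 1/2` and `h x = (1/2)((x-1/12)/(11/12))³`
(taken as `0` for `x ≤ 1/12`). -/
theorem dyadic_truncated_invariant_region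
    (β : ℝ) (hβ : 1 ≤ β) (N : ℕ) (hN : 1 ≤ N)
    (Y : ℕ → ℝ → ℝ)
    (hY0 : ∀ t : ℝ, Y 0 t = 0)
    (hYtop : ∀ t : ℝ, Y (N+1) t = Y N t)
    (hODE : ∀ n : ℕ, 1 ≤ n → n ≤ N → ∀ t : ℝ, 0 ≤ t →
      HasDerivAt (Y n)
        ((2:ℝ) ^ ((2*β+1)/3 * (n:ℝ) - (β+2)/3)
          * ((Y (n-1) t) ^ 2 - 2 * Y n t * Y (n+1) t)) t)
    (A : Set (ℝ × ℝ))
    (hA : A = {p : ℝ × ℝ | p.1 ∈ Set.Icc (0:ℝ) 1 ∧ p.2 ∈ Set.Icc (0:ℝ) 1 ∧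
      (if p.1 ≤ 1/12 then (0:ℝ) else (1/2) * ((p.1 - 1/12) / (11/12)) ^ 3) ≤ p.2 ∧
      p.2 ≤ 4/5 * p.1 + 1/2})
    (hinit : ∀ n : ℕ, 1 ≤ n → n + 1 ≤ N → (Y n 0, Y (n+1) 0) ∈ A) :
    ∀ t : ℝ, 0 ≤ t → ∀ n : ℕ, 1 ≤ n → n + 1 ≤ N → (Y n t, Y (n+1) t) ∈ A := by
  intro t ht n hn1 hn2
  have hN2 : 2 ≤ N := by omega
  set CC := (2:ℝ)^((2*β+1)/3*(N:ℝ)) with hCCdef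
  have hCC1 : 1 ≤ CC := one_le_CB β hβ N
  have hCCle : ∀ m : ℕ, m ≤ N → coef β m ≤ CC := fun m hm => coef_le β hβ hm
  have hODE' : ∀ m : ℕ, 1 ≤ m → m ≤ N → ∀ u : ℝ, 0 ≤ u →
      HasDerivAt (Y m) (coef β m * ((Y (m-1) u) ^ 2 - 2 * Y m u * Y (m+1) u)) u := hODE
  have hinit' : ∀ m : ℕ, 1 ≤ m → m + 1 ≤ N →
      (0 ≤ Y m 0 ∧ Y m 0 ≤ 1) ∧ (0 ≤ Y (m+1) 0 ∧ Y (m+1) 0 ≤ 1) ∧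
      Hf (Y m 0) ≤ Y (m+1) 0 ∧ Y (m+1) 0 ≤ 4/5 * Y m 0 + 1/2 := by
    intro m h1 h2
    have hm := hinit m h1 h2
    rw [hA] at hm
    obtain ⟨hm1, hm2, hm3, hm4⟩ := hm
    exact ⟨⟨hm1.1, hm1.2⟩, ⟨hm2.1, hm2.2⟩, hm3, hm4⟩
  have hmain : ∀ δ : ℝ, 0 < δ →
      (-δ ≤ Y n t ∧ Y n t ≤ 1 + δ) ∧ (-δ ≤ Y (n+1) t ∧ Y (n+1) t ≤ 1 + δ) ∧
      Hf (Y n t) - Y (n+1) t ≤ δ ∧ Y (n+1) t - (4/5 * Y n t + 1/2) ≤ δ := by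
    intro δ hδ
    set ε := min (1/100) δ * Real.exp (-(100*CC*t)) with hεdef
    have hε : 0 < ε := mul_pos (lt_min (by norm_num) hδ) (exp_pos _)
    have hεval : ε * Real.exp (100*CC*t) = min (1/100) δ := by
      rw [hεdef, mul_assoc, ← Real.exp_add, neg_add_cancel, Real.exp_zero, mul_one]
    have hεb : ε * Real.exp (100*CC*t) ≤ 1/100 := by
      rw [hεval]; exact min_le_left _ _
    have hεδ : ε * Real.exp (100*CC*t) ≤ δ := by
      rw [hεval]; exact min_le_right _ _
    have hkey := keyLemma β hβ N hN2 Y hY0 hYtop hODE' hinit' CC hCC1 hCCle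
      t ht ε hε hεb t ⟨ht, le_rfl⟩ n hn1 hn2
    obtain ⟨⟨g1, g2⟩, ⟨g3, g4⟩, g5, g6⟩ := hkey
    refine ⟨⟨by linarith, by linarith⟩, ⟨by linarith, by linarith⟩, by linarith, by linarith⟩
  have h1 : 0 ≤ Y n t := by
    have := le_of_forall_pos_le_add (a := -(Y n t)) (b := 0)
      (fun δ hδ => by linarith [(hmain δ hδ).1.1])
    linarith
  have h2 : Y n t ≤ 1 :=
    le_of_forall_pos_le_add (fun δ hδ => by linarith [(hmain δ hδ).1.2])
  have h3 : 0 ≤ Y (n+1) t := by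
    have := le_of_forall_pos_le_add (a := -(Y (n+1) t)) (b := 0)
      (fun δ hδ => by linarith [(hmain δ hδ).2.1.1])
    linarith
  have h4 : Y (n+1) t ≤ 1 :=
    le_of_forall_pos_le_add (fun δ hδ => by linarith [(hmain δ hδ).2.1.2])
  have h5 : Hf (Y n t) ≤ Y (n+1) t := by
    have := le_of_forall_pos_le_add (a := Hf (Y n t) - Y (n+1) t) (b := 0)
      (fun δ hδ => by linarith [(hmain δ hδ).2.2.1])
    linarith
  have h6 : Y (n+1) t ≤ 4/5 * Y n t + 1/2 := by
    have := le_of_forall_pos_le_add (a := Y (n+1) t - (4/5 * Y n t + 1/2)) (b := 0)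
      (fun δ hδ => by linarith [(hmain δ hδ).2.2.2])
    linarith
  rw [hA]
  exact ⟨⟨h1, h2⟩, ⟨h3, h4⟩, h5, h6⟩
end
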